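/- arXiv:0711.1268 — 6 statements merged into one kernel-verified Lean document; each statement's English description precedes it below -/
import Mathlib

section
/- Let (fₙ)ₙ≥1 be a sequence of [0,∞]-valued random variables on a probability space (Ω, 𝓕, P). Then there exists a sequence gₙ ∈ conv(fₙ, fₙ₊₁, …) (finite convex combinations of the tail of the sequence) which converges almost surely to a random variable g taking values in [0,∞]. -/
open MeasureTheory Filter Topology
set_option linter.unusedSectionVars false

noncomputable def psiE (x : ENNReal) : ℝ := if x = ⊤ then 0 else Real.exp (-x.toReal / 2)

lemma psiE_top : psiE ⊤ = 0 := if_pos rfl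

lemma psiE_ne_top {x : ENNReal} (hx : x ≠ ⊤) : psiE x = Real.exp (-x.toReal / 2) := if_neg hx

lemma psiE_nonneg (x : ENNReal) : 0 ≤ psiE x := by
  unfold psiE; split
  · exact le_refl 0
  · exact (Real.exp_pos _).le

lemma psiE_le_one (x : ENNReal) : psiE x ≤ 1 := by
  unfold psiE; split
  · norm_num
  · exact Real.exp_le_one_iff.mpr (by
      have := ENNReal.toReal_nonneg (a := x); linarith)

lemma continuous_psiE : Continuous psiE := by
  rw [continuous_iff_continuousAt]
  intro x
  rcases eq_or_ne x ⊤ with rfl | hx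
  · rw [ContinuousAt, psiE_top, Metric.tendsto_nhds]
    intro ε hε
    set M : ℝ := max 0 (-2 * Real.log ε) + 1 with hM
    have hM0 : 0 ≤ M := by positivity
    have hMgt : -2 * Real.log ε < M := by
      have : -2 * Real.log ε ≤ max 0 (-2 * Real.log ε) := le_max_right _ _
      linarith
    filter_upwards [Ioi_mem_nhds (show ENNReal.ofReal M < ⊤ from ENNReal.ofReal_lt_top)] with y hy
    rw [Set.mem_Ioi] at hy
    rcases eq_or_ne y ⊤ with rfl | hy'
    · simpa [psiE_top] using hε
    · rw [psiE_ne_top hy', Real.dist_eq, sub_zero, abs_of_pos (Real.exp_pos _)]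
      have hMy : M < y.toReal := by
        rwa [ENNReal.ofReal_lt_iff_lt_toReal hM0 hy'] at hy
      calc Real.exp (-y.toReal / 2) < Real.exp (Real.log ε) := by
            apply Real.exp_lt_exp.mpr; linarith
        _ = ε := Real.exp_log hε
  · have hmem : {y : ENNReal | y ≠ ⊤} ∈ 𝓝 x := (isOpen_ne).mem_nhds hx
    have hca : ContinuousAt (fun y : ENNReal => Real.exp (-y.toReal / 2)) x := by
      apply ContinuousAt.comp (Real.continuous_exp.continuousAt)
      exact ((ENNReal.tendsto_toReal hx).neg.div_const 2)
    exact hca.congr (Filter.eventuallyEq_of_mem hmem (fun y hy => (psiE_ne_top hy).symm))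

lemma psiE_injective : Function.Injective psiE := by
  intro a b h
  rcases eq_or_ne a ⊤ with rfl | ha <;> rcases eq_or_ne b ⊤ with rfl | hb
  · rfl
  · exfalso; rw [psiE_top, psiE_ne_top hb] at h; exact (Real.exp_pos _).ne' h.symm
  · exfalso; rw [psiE_top, psiE_ne_top ha] at h; exact (Real.exp_pos _).ne' h
  · rw [psiE_ne_top ha, psiE_ne_top hb] at h
    have h2 := Real.exp_injective h
    have h3 : a.toReal = b.toReal := by linarith
    exact (ENNReal.toReal_eq_toReal_iff' ha hb).mp h3

lemma psiE_mid (a b : ENNReal) : psiE ((a + b) / 2) ^ 2 = psiE a * psiE b := by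
  rcases eq_or_ne a ⊤ with rfl | ha
  · have htd : ((⊤ : ENNReal) + b) / 2 = ⊤ := by
      rw [top_add]; exact ENNReal.top_div_of_ne_top (by norm_num)
    rw [htd, psiE_top]; simp [psiE_top]
  rcases eq_or_ne b ⊤ with rfl | hb
  · have htd : (a + (⊤ : ENNReal)) / 2 = ⊤ := by
      rw [add_top]; exact ENNReal.top_div_of_ne_top (by norm_num)
    rw [htd, psiE_top]; simp [psiE_top]
  · have hab : (a + b) / 2 ≠ ⊤ := by
      simp [ENNReal.div_eq_top, ENNReal.add_ne_top, ha, hb]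
    rw [psiE_ne_top hab, psiE_ne_top ha, psiE_ne_top hb]
    have ht : ((a + b) / 2).toReal = (a.toReal + b.toReal) / 2 := by
      rw [ENNReal.toReal_div, ENNReal.toReal_add ha hb]; norm_num
    rw [ht, ← Real.exp_add, sq, ← Real.exp_add]
    ring_nf

section MemC
variable {Ω : Type*} [MeasurableSpace Ω]

def memC (f : ℕ → Ω → ENNReal) (n : ℕ) (h : Ω → ENNReal) : Prop :=
  ∃ (s : Finset ℕ) (w : ℕ → ENNReal), s.Nonempty ∧ (∀ k ∈ s, n ≤ k) ∧
    (∑ k ∈ s, w k) = 1 ∧ ∀ ω, h ω = ∑ k ∈ s, w k * f k ω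

lemma memC_self (f : ℕ → Ω → ENNReal) (n : ℕ) : memC f n (f n) :=
  ⟨{n}, fun _ => 1, Finset.singleton_nonempty n, by simp, by simp, by simp⟩

lemma memC_mono {f : ℕ → Ω → ENNReal} {m n : ℕ} (hmn : m ≤ n) {h : Ω → ENNReal}
    (hh : memC f n h) : memC f m h := by
  obtain ⟨s, w, hs, hk, hw, hrep⟩ := hh
  exact ⟨s, w, hs, fun k hks => hmn.trans (hk k hks), hw, hrep⟩

lemma memC_measurable {f : ℕ → Ω → ENNReal} (hf : ∀ n, Measurable (f n)) {n : ℕ}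
    {h : Ω → ENNReal} (hh : memC f n h) : Measurable h := by
  obtain ⟨s, w, _, _, _, hrep⟩ := hh
  have : h = fun ω => ∑ k ∈ s, w k * f k ω := funext hrep
  rw [this]
  exact Finset.measurable_sum s (fun k _ => (hf k).const_mul _)

lemma memC_mid {f : ℕ → Ω → ENNReal} {n m : ℕ} {h1 h2 : Ω → ENNReal}
    (H1 : memC f n h1) (H2 : memC f m h2) :
    memC f (min n m) (fun ω => (h1 ω + h2 ω) / 2) := by
  obtain ⟨s1, w1, hs1, hk1, hw1, hrep1⟩ := H1
  obtain ⟨s2, w2, hs2, hk2, hw2, hrep2⟩ := H2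
  refine ⟨s1 ∪ s2, fun k => ((if k ∈ s1 then w1 k else 0) + (if k ∈ s2 then w2 k else 0)) / 2,
    hs1.mono Finset.subset_union_left, ?_, ?_, ?_⟩
  · intro k hk
    rcases Finset.mem_union.mp hk with hk | hk
    · exact le_trans (min_le_left n m) (hk1 k hk)
    · exact le_trans (min_le_right n m) (hk2 k hk)
  · have e1 : ∑ k ∈ s1 ∪ s2, (if k ∈ s1 then w1 k else 0) = ∑ k ∈ s1, w1 k := by
      rw [Finset.sum_ite_mem, Finset.union_inter_cancel_left]
    have e2 : ∑ k ∈ s1 ∪ s2, (if k ∈ s2 then w2 k else 0) = ∑ k ∈ s2, w2 k := by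
      rw [Finset.sum_ite_mem, Finset.union_inter_cancel_right]
    have key : ∀ k : ℕ, ((if k ∈ s1 then w1 k else 0) + (if k ∈ s2 then w2 k else 0)) / 2
        = (if k ∈ s1 then w1 k else 0) * 2⁻¹ + (if k ∈ s2 then w2 k else 0) * 2⁻¹ := by
      intro k; rw [div_eq_mul_inv]; ring
    rw [Finset.sum_congr rfl (fun k _ => key k), Finset.sum_add_distrib, ← Finset.sum_mul,
      ← Finset.sum_mul, e1, e2, hw1, hw2]
    rw [one_mul, ← two_mul, ENNReal.mul_inv_cancel (by norm_num) (by norm_num)]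
  · intro ω
    have e1 : ∑ k ∈ s1 ∪ s2, (if k ∈ s1 then w1 k else 0) * f k ω = h1 ω := by
      rw [hrep1 ω]
      simp only [ite_mul, zero_mul]
      rw [Finset.sum_ite_mem, Finset.union_inter_cancel_left]
    have e2 : ∑ k ∈ s1 ∪ s2, (if k ∈ s2 then w2 k else 0) * f k ω = h2 ω := by
      rw [hrep2 ω]
      simp only [ite_mul, zero_mul]
      rw [Finset.sum_ite_mem, Finset.union_inter_cancel_right]
    have key : ∀ k : ℕ, ((if k ∈ s1 then w1 k else 0) + (if k ∈ s2 then w2 k else 0)) / 2 * f k ω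
        = (if k ∈ s1 then w1 k else 0) * f k ω * 2⁻¹ + (if k ∈ s2 then w2 k else 0) * f k ω * 2⁻¹ := by
      intro k; rw [div_eq_mul_inv]; ring
    show (h1 ω + h2 ω) / 2 = _
    rw [Finset.sum_congr rfl (fun k _ => key k), Finset.sum_add_distrib, ← Finset.sum_mul,
      ← Finset.sum_mul, e1, e2, div_eq_mul_inv, add_mul]

end MemC

section Komlos
variable {Ω : Type*} [MeasurableSpace Ω]

noncomputable def Ifun (P : Measure Ω) (h : Ω → ENNReal) : ℝ := ∫ ω, (psiE (h ω))^2 ∂P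

noncomputable def tval (P : Measure Ω) (f : ℕ → Ω → ENNReal) (n : ℕ) : ℝ :=
  sInf (Ifun P '' {h | memC f n h})

variable {P : Measure Ω} {f : ℕ → Ω → ENNReal}

lemma integrable_bdd (P : Measure Ω) [IsFiniteMeasure P] {u : Ω → ℝ} (hm : Measurable u)
    (C : ℝ) (hb : ∀ ω, |u ω| ≤ C) : Integrable u P :=
  (integrable_const C).mono' hm.aestronglyMeasurable
    (by filter_upwards with ω; simpa [Real.norm_eq_abs] using hb ω)

lemma integrable_phi (P : Measure Ω) [IsFiniteMeasure P] {h : Ω → ENNReal}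
    (hm : Measurable h) : Integrable (fun ω => (psiE (h ω))^2) P := by
  refine integrable_bdd P ((continuous_psiE.measurable.comp hm).pow_const 2) 1 fun ω => ?_
  rw [abs_of_nonneg (sq_nonneg _)]
  calc (psiE (h ω))^2 ≤ 1^2 := pow_le_pow_left₀ (psiE_nonneg _) (psiE_le_one _) 2
    _ = 1 := one_pow 2

lemma Ifun_nonneg (P : Measure Ω) (h : Ω → ENNReal) : 0 ≤ Ifun P h :=
  integral_nonneg fun ω => sq_nonneg _

lemma Ifun_le_one (P : Measure Ω) [IsProbabilityMeasure P] (h : Ω → ENNReal) :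
    Ifun P h ≤ 1 := by
  have : Ifun P h ≤ ∫ _ω, (1:ℝ) ∂P := by
    refine integral_mono_of_nonneg (Filter.Eventually.of_forall fun ω => sq_nonneg _)
      (integrable_const 1) (Filter.Eventually.of_forall fun ω => ?_)
    calc (psiE (h ω))^2 ≤ 1^2 := pow_le_pow_left₀ (psiE_nonneg _) (psiE_le_one _) 2
      _ = 1 := one_pow 2
  simpa using this

lemma Cn_nonempty (f : ℕ → Ω → ENNReal) (n : ℕ) :
    (Ifun P '' {h | memC f n h}).Nonempty := ⟨_, ⟨f n, memC_self f n, rfl⟩⟩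

lemma Cn_bddBelow (f : ℕ → Ω → ENNReal) (n : ℕ) :
    BddBelow (Ifun P '' {h | memC f n h}) := by
  refine ⟨0, fun x hx => ?_⟩
  obtain ⟨h, _, rfl⟩ := hx
  exact Ifun_nonneg P h

lemma tval_le {n : ℕ} {h : Ω → ENNReal} (hh : memC f n h) : tval P f n ≤ Ifun P h :=
  csInf_le (Cn_bddBelow f n) ⟨h, hh, rfl⟩

lemma tval_le_one (P : Measure Ω) [IsProbabilityMeasure P] (f : ℕ → Ω → ENNReal) (n : ℕ) :
    tval P f n ≤ 1 := le_trans (tval_le (memC_self f n)) (Ifun_le_one P _)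

lemma tval_mono (P : Measure Ω) (f : ℕ → Ω → ENNReal) : Monotone (tval P f) := by
  intro a b hab
  refine csInf_le_csInf (Cn_bddBelow f a) (Cn_nonempty f b) ?_
  rintro x ⟨h, hh, rfl⟩
  exact ⟨h, memC_mono hab hh, rfl⟩

lemma key_identity (P : Measure Ω) [IsProbabilityMeasure P] (hf : ∀ n, Measurable (f n))
    {n m : ℕ} {h1 h2 : Ω → ENNReal} (H1 : memC f n h1) (H2 : memC f m h2) :
    ∫ ω, (psiE (h1 ω) - psiE (h2 ω))^2 ∂P
      = Ifun P h1 + Ifun P h2 - 2 * Ifun P (fun ω => (h1 ω + h2 ω) / 2) := by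
  have i1 := integrable_phi P (memC_measurable hf H1)
  have i2 := integrable_phi P (memC_measurable hf H2)
  have i3 := integrable_phi P (memC_measurable hf (memC_mid H1 H2))
  have hpt : ∀ ω, (psiE (h1 ω) - psiE (h2 ω))^2
      = (psiE (h1 ω))^2 + (psiE (h2 ω))^2 - 2 * (psiE ((h1 ω + h2 ω) / 2))^2 := by
    intro ω
    rw [psiE_mid (h1 ω) (h2 ω)]
    ring
  calc ∫ ω, (psiE (h1 ω) - psiE (h2 ω))^2 ∂P
      = ∫ ω, ((psiE (h1 ω))^2 + (psiE (h2 ω))^2 - 2 * (psiE ((h1 ω + h2 ω) / 2))^2) ∂P := by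
        congr 1; funext ω; exact hpt ω
    _ = Ifun P h1 + Ifun P h2 - 2 * Ifun P (fun ω => (h1 ω + h2 ω) / 2) := by
        have i12 : Integrable (fun ω => (psiE (h1 ω))^2 + (psiE (h2 ω))^2) P := i1.add i2
        have i3' : Integrable (fun ω => 2 * (psiE ((h1 ω + h2 ω) / 2))^2) P := i3.const_mul 2
        rw [integral_sub i12 i3', integral_add i1 i2, integral_const_mul]
        rfl

end Komlos
/-- Komlos-type lemma: for a sequence of [0,∞]-valued random
variables there are finite convex combinations of the tails converging a.s. -/
theorem komlos_type {Ω : Type*} [MeasurableSpace Ω] (P : Measure Ω) [IsProbabilityMeasure P]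
    (f : ℕ → Ω → ENNReal) (hf : ∀ n, Measurable (f n)) :
    ∃ g : ℕ → Ω → ENNReal,
      (∀ n : ℕ, ∃ (s : Finset ℕ) (w : ℕ → ENNReal), s.Nonempty ∧ (∀ k ∈ s, n ≤ k) ∧
        (∑ k ∈ s, w k) = 1 ∧ ∀ ω, g n ω = ∑ k ∈ s, w k * f k ω) ∧
      ∃ glim : Ω → ENNReal,
        ∀ᵐ ω ∂P, Tendsto (fun n => g n ω) atTop (𝓝 (glim ω)) := by
  classical
  have tbdd : BddAbove (Set.range (tval P f)) := ⟨1, by rintro x ⟨n, rfl⟩; exact tval_le_one P f n⟩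
  set T : ℝ := ⨆ n, tval P f n with hT
  have tlim : Tendsto (tval P f) atTop (𝓝 T) := tendsto_atTop_ciSup (tval_mono P f) tbdd
  have tleT : ∀ n, tval P f n ≤ T := fun n => le_ciSup tbdd n
  -- approximate minimizers
  have happrox : ∀ m : ℕ, ∃ h, memC f m h ∧ Ifun P h < tval P f m + (1/2 : ℝ)^m := by
    intro m
    have hlt : tval P f m < tval P f m + (1/2:ℝ)^m := lt_add_of_pos_right _ (by positivity)
    obtain ⟨a, ⟨h, hh, rfl⟩, ha⟩ := exists_lt_of_csInf_lt (Cn_nonempty f m) hlt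
    exact ⟨h, hh, ha⟩
  choose gg hgmem hgI using happrox
  -- index selection
  have hidx : ∀ k : ℕ, ∃ N : ℕ, ∀ j ≥ N, T - (1/2:ℝ)^k < tval P f j := by
    intro k
    have hlt : T - (1/2:ℝ)^k < T := sub_lt_self _ (by positivity)
    exact eventually_atTop.1 (tlim.eventually (eventually_gt_nhds hlt))
  choose N hN using hidx
  have hGmem : ∀ k, memC f k (gg (max k (N k))) :=
    fun k => memC_mono (le_max_left _ _) (hgmem (max k (N k)))
  -- estimate on squared differences
  have hB : ∀ k : ℕ,
      ∫ ω, (psiE (gg (max k (N k)) ω) - psiE (gg (max (k+1) (N (k+1))) ω))^2 ∂P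
        ≤ 4 * (1/2:ℝ)^k := by
    intro k
    have h1 := hgmem (max k (N k))
    have h2 := hgmem (max (k+1) (N (k+1)))
    have hid := key_identity P hf h1 h2
    have h3 : tval P f (min (max k (N k)) (max (k+1) (N (k+1))))
        ≤ Ifun P (fun ω => (gg (max k (N k)) ω + gg (max (k+1) (N (k+1))) ω) / 2) :=
      tval_le (memC_mid h1 h2)
    have hpow1 : (1/2:ℝ)^(k+1) ≤ (1/2:ℝ)^k :=
      pow_le_pow_of_le_one (by norm_num) (by norm_num) (Nat.le_succ k)
    have h4 : T - (1/2:ℝ)^k ≤ tval P f (min (max k (N k)) (max (k+1) (N (k+1)))) := by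
      rcases le_total (max k (N k)) (max (k+1) (N (k+1))) with hle | hle
      · rw [min_eq_left hle]
        exact (hN k _ (le_max_right _ _)).le
      · rw [min_eq_right hle]
        have := hN (k+1) _ (le_max_right (k+1) (N (k+1)))
        linarith
    have h5 : Ifun P (gg (max k (N k))) < T + (1/2:ℝ)^k := by
      have ha := hgI (max k (N k))
      have h6 : (1/2:ℝ)^(max k (N k)) ≤ (1/2:ℝ)^k :=
        pow_le_pow_of_le_one (by norm_num) (by norm_num) (le_max_left _ _)
      have h7 := tleT (max k (N k))
      linarith
    have h5' : Ifun P (gg (max (k+1) (N (k+1)))) < T + (1/2:ℝ)^k := by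
      have ha := hgI (max (k+1) (N (k+1)))
      have h6 : (1/2:ℝ)^(max (k+1) (N (k+1))) ≤ (1/2:ℝ)^(k+1) :=
        pow_le_pow_of_le_one (by norm_num) (by norm_num) (le_max_left _ _)
      have h7 := tleT (max (k+1) (N (k+1)))
      linarith
    rw [hid]
    linarith
  -- measurability facts
  have hqm : ∀ k, Measurable (fun ω => psiE (gg (max k (N k)) ω)) :=
    fun k => continuous_psiE.measurable.comp (memC_measurable hf (hgmem _))
  have hqb : ∀ k ω, |psiE (gg (max k (N k)) ω)| ≤ 1 := by
    intro k ω
    rw [abs_of_nonneg (psiE_nonneg _)]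
    exact psiE_le_one _
  have hum : ∀ k, Measurable (fun ω =>
      psiE (gg (max k (N k)) ω) - psiE (gg (max (k+1) (N (k+1))) ω)) :=
    fun k => (hqm k).sub (hqm (k+1))
  have hub : ∀ k ω, |psiE (gg (max k (N k)) ω) - psiE (gg (max (k+1) (N (k+1))) ω)| ≤ 2 := by
    intro k ω
    calc |psiE (gg (max k (N k)) ω) - psiE (gg (max (k+1) (N (k+1))) ω)|
        ≤ |psiE (gg (max k (N k)) ω)| + |psiE (gg (max (k+1) (N (k+1))) ω)| := abs_sub _ _
      _ ≤ 1 + 1 := add_le_add (hqb k ω) (hqb (k+1) ω)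
      _ = 2 := by norm_num
  have hu2int : ∀ k, Integrable (fun ω =>
      (psiE (gg (max k (N k)) ω) - psiE (gg (max (k+1) (N (k+1))) ω))^2) P := by
    intro k
    refine integrable_bdd P ((hum k).pow_const 2) 4 fun ω => ?_
    rw [abs_of_nonneg (sq_nonneg _)]
    calc (psiE (gg (max k (N k)) ω) - psiE (gg (max (k+1) (N (k+1))) ω))^2
        ≤ 2^2 := sq_le_sq' (by linarith [abs_le.1 (hub k ω)]) (by linarith [abs_le.1 (hub k ω)])
      _ = 4 := by norm_num
  have habsint : ∀ k, Integrable (fun ω =>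
      |psiE (gg (max k (N k)) ω) - psiE (gg (max (k+1) (N (k+1))) ω)|) P :=
    fun k => integrable_bdd P (hum k).abs 2 (fun ω => by rw [abs_abs]; exact hub k ω)
  -- constants
  have hs2 : Real.sqrt 2 * Real.sqrt 2 = 2 := Real.mul_self_sqrt (by norm_num)
  have hs2pos : 0 < Real.sqrt 2 := Real.sqrt_pos.mpr (by norm_num)
  have hs2gt1 : 1 < Real.sqrt 2 := by nlinarith
  set c : ℝ := (Real.sqrt 2)⁻¹ with hc
  have hc0 : 0 < c := inv_pos.mpr hs2pos
  have hc1 : c < 1 := inv_lt_one_of_one_lt₀ hs2gt1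
  have hkeyc : Real.sqrt 2 * (1/2) = c := by
    rw [hc]; field_simp; exact Real.sq_sqrt (by norm_num)
  -- L¹ estimate
  have hd : ∀ k : ℕ,
      ∫ ω, |psiE (gg (max k (N k)) ω) - psiE (gg (max (k+1) (N (k+1))) ω)| ∂P
        ≤ (5/2) * c^k := by
    intro k
    set a : ℝ := (Real.sqrt 2)^k with hadef
    have ha : 0 < a := pow_pos hs2pos k
    have hainv : 0 < a⁻¹ := inv_pos.mpr ha
    have haa : a * a⁻¹ = 1 := mul_inv_cancel₀ ha.ne'
    have hptw : ∀ ω, |psiE (gg (max k (N k)) ω) - psiE (gg (max (k+1) (N (k+1))) ω)|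
        ≤ (a * (psiE (gg (max k (N k)) ω) - psiE (gg (max (k+1) (N (k+1))) ω))^2 + a⁻¹)/2 := by
      intro ω
      set u := psiE (gg (max k (N k)) ω) - psiE (gg (max (k+1) (N (k+1))) ω) with hu
      have h1 : 0 ≤ (a * |u| - 1)^2 := sq_nonneg _
      have h3 : |u|^2 = u^2 := sq_abs _
      have h1' : 0 ≤ a^2 * u^2 - 2*a*|u| + 1 := by nlinarith [h1, h3]
      have key : 0 ≤ a * (a * u^2 + a⁻¹ - 2*|u|) := by
        have : a * (a * u^2 + a⁻¹ - 2*|u|) = a^2 * u^2 + a * a⁻¹ - 2*a*|u| := by ring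
        rw [this, haa]; linarith
      have key2 : 0 ≤ a * u^2 + a⁻¹ - 2*|u| := by
        by_contra hneg
        push_neg at hneg
        nlinarith [mul_pos ha (neg_pos.mpr hneg)]
      linarith
    have hirhs : Integrable (fun ω =>
        (a * (psiE (gg (max k (N k)) ω) - psiE (gg (max (k+1) (N (k+1))) ω))^2 + a⁻¹)/2) P :=
      (((hu2int k).const_mul a).add (integrable_const _)).div_const 2
    have hmono := integral_mono (habsint k) hirhs hptw
    have hRHS : ∫ ω, (a * (psiE (gg (max k (N k)) ω)
          - psiE (gg (max (k+1) (N (k+1))) ω))^2 + a⁻¹)/2 ∂P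
        = (a * (∫ ω, (psiE (gg (max k (N k)) ω)
            - psiE (gg (max (k+1) (N (k+1))) ω))^2 ∂P) + a⁻¹)/2 := by
      rw [integral_div, integral_add ((hu2int k).const_mul a) (integrable_const _),
        integral_const_mul, integral_const]
      simp
    rw [hRHS] at hmono
    have hstep : a * (∫ ω, (psiE (gg (max k (N k)) ω)
          - psiE (gg (max (k+1) (N (k+1))) ω))^2 ∂P) ≤ a * (4 * (1/2:ℝ)^k) :=
      mul_le_mul_of_nonneg_left (hB k) ha.le
    have hcomp : (a * (4 * (1/2:ℝ)^k) + a⁻¹)/2 = (5/2) * c^k := by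
      have e1 : a * (4 * (1/2:ℝ)^k) = 4 * c^k := by
        rw [hadef, ← hkeyc, mul_pow]
        ring
      have e2 : a⁻¹ = c^k := by rw [hadef, ← inv_pow, hc]
      rw [e1, e2]; ring
    linarith
  -- summability / a.e. convergence
  have hdm : ∀ k, Measurable (fun ω =>
      ENNReal.ofReal (|psiE (gg (max k (N k)) ω) - psiE (gg (max (k+1) (N (k+1))) ω)|)) :=
    fun k => ENNReal.measurable_ofReal.comp (hum k).abs
  have hfin : ∫⁻ ω, ∑' k, ENNReal.ofReal
      (|psiE (gg (max k (N k)) ω) - psiE (gg (max (k+1) (N (k+1))) ω)|) ∂P ≠ ⊤ := by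
    rw [lintegral_tsum (fun k => (hdm k).aemeasurable)]
    have hle : ∀ k : ℕ, ∫⁻ ω, ENNReal.ofReal
        (|psiE (gg (max k (N k)) ω) - psiE (gg (max (k+1) (N (k+1))) ω)|) ∂P
        ≤ ENNReal.ofReal (5/2) * (ENNReal.ofReal c)^k := by
      intro k
      rw [← ofReal_integral_eq_lintegral_ofReal (habsint k)
        (Filter.Eventually.of_forall fun ω => abs_nonneg _)]
      calc ENNReal.ofReal (∫ ω, |psiE (gg (max k (N k)) ω)
            - psiE (gg (max (k+1) (N (k+1))) ω)| ∂P)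
          ≤ ENNReal.ofReal ((5/2) * c^k) := ENNReal.ofReal_le_ofReal (hd k)
        _ = ENNReal.ofReal (5/2) * (ENNReal.ofReal c)^k := by
            rw [ENNReal.ofReal_mul (by norm_num), ENNReal.ofReal_pow hc0.le]
    refine ne_top_of_le_ne_top ?_ (ENNReal.tsum_le_tsum hle)
    rw [ENNReal.tsum_mul_left, ENNReal.tsum_geometric]
    exact ENNReal.mul_ne_top ENNReal.ofReal_ne_top
      (ENNReal.inv_ne_top.mpr (tsub_pos_of_lt (ENNReal.ofReal_lt_one.mpr hc1)).ne')
  have hae : ∀ᵐ ω ∂P, ∑' k, ENNReal.ofReal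
      (|psiE (gg (max k (N k)) ω) - psiE (gg (max (k+1) (N (k+1))) ω)|) ≠ ⊤ := by
    filter_upwards [ae_lt_top (Measurable.ennreal_tsum hdm) hfin] with ω hω
    exact hω.ne
  have hemb : IsClosedEmbedding psiE := continuous_psiE.isClosedEmbedding psiE_injective
  have hconv : ∀ᵐ ω ∂P, ∃ x : ENNReal,
      Tendsto (fun k => gg (max k (N k)) ω) atTop (𝓝 x) := by
    filter_upwards [hae] with ω hω
    have hcs : CauchySeq (fun k => psiE (gg (max k (N k)) ω)) := by
      refine cauchySeq_of_edist_le_of_tsum_ne_top _ (fun k => ?_) hω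
      rw [edist_dist, Real.dist_eq]
    obtain ⟨r, hr⟩ := cauchySeq_tendsto_of_complete hcs
    have hrmem : r ∈ Set.range psiE :=
      hemb.isClosed_range.mem_of_tendsto hr
        (Filter.Eventually.of_forall fun k => ⟨gg (max k (N k)) ω, rfl⟩)
    obtain ⟨x, hx⟩ := hrmem
    refine ⟨x, ?_⟩
    rw [hemb.toIsEmbedding.tendsto_nhds_iff]
    rw [hx]
    exact hr
  refine ⟨fun k => gg (max k (N k)), fun n => hGmem n,
    fun ω => if hω : ∃ x : ENNReal,
      Tendsto (fun k => gg (max k (N k)) ω) atTop (𝓝 x) then hω.choose else 0, ?_⟩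
  filter_upwards [hconv] with ω hω
  rw [dif_pos hω]
  exact hω.choose_spec
end

section
/- Let (Ω₁, μ₁) and (Ω₂, μ₂) be probability spaces and φₙ : Ω₁ → ℝ, ψₙ : Ω₂ → ℝ measurable functions such that φₙ(ω₁) + ψₙ(ω₂) → -∞ in μ₁ ⊗ μ₂-probability. For 0 < α < 1 define the α-quantiles qₙ¹(α) := inf{x : μ₁(φₙ ≥ x) ≤ α} and qₙ²(α) := inf{y : μ₂(ψₙ ≥ y) ≤ α}. Then for each fixed α ∈ (0,1), limₙ (qₙ¹(α) + qₙ²(α)) = -∞. -/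
open MeasureTheory Filter Topology

lemma quantile_set_bddBelow {Ω : Type*} [MeasurableSpace Ω] (μ : Measure Ω)
    [IsProbabilityMeasure μ] (f : Ω → ℝ) (β : ENNReal) (hβ : β < 1) :
    BddBelow {x : ℝ | μ {ω | x ≤ f ω} ≤ β} := by
  have hmono : Monotone (fun k : ℕ => {ω | -(k : ℝ) ≤ f ω}) := by
    intro k l hkl ω hω
    simp only [Set.mem_setOf_eq] at hω ⊢
    have h : (k : ℝ) ≤ l := Nat.cast_le.mpr hkl
    linarith
  have hunion : (⋃ k : ℕ, {ω | -(k : ℝ) ≤ f ω}) = Set.univ := by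
    ext ω
    simp only [Set.mem_iUnion, Set.mem_univ, iff_true, Set.mem_setOf_eq]
    obtain ⟨k, hk⟩ := exists_nat_ge (-f ω)
    exact ⟨k, by linarith⟩
  have htend : Tendsto (fun k : ℕ => μ {ω | -(k : ℝ) ≤ f ω}) atTop
      (𝓝 (μ (⋃ k : ℕ, {ω | -(k : ℝ) ≤ f ω}))) :=
    tendsto_measure_iUnion_atTop hmono
  rw [hunion, measure_univ] at htend
  have := htend.eventually (lt_mem_nhds hβ)
  obtain ⟨k₀, hk₀⟩ := this.exists
  refine ⟨-(k₀ : ℝ), fun x hx => ?_⟩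
  by_contra hlt
  push_neg at hlt
  have hsub : {ω | -(k₀ : ℝ) ≤ f ω} ⊆ {ω | x ≤ f ω} :=
    fun ω hω => le_trans hlt.le hω
  exact absurd (le_trans (measure_mono hsub) hx) (not_le.mpr hk₀)

/-- if φₙ(ω₁) + ψₙ(ω₂) → -∞ in μ₁ ⊗ μ₂-probability, then for each
fixed α ∈ (0,1) the sum of the α-quantiles qₙ¹(α) + qₙ²(α) tends to -∞. -/
theorem quantile_sum_tendsto_bot
    {Ω₁ Ω₂ : Type*} [MeasurableSpace Ω₁] [MeasurableSpace Ω₂]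
    (μ₁ : Measure Ω₁) (μ₂ : Measure Ω₂) [IsProbabilityMeasure μ₁] [IsProbabilityMeasure μ₂]
    (φ : ℕ → Ω₁ → ℝ) (ψ : ℕ → Ω₂ → ℝ)
    (hφ : ∀ n, Measurable (φ n)) (hψ : ∀ n, Measurable (ψ n))
    (hconv : ∀ M : ℝ,
      Tendsto (fun n => (μ₁.prod μ₂) {p | M ≤ φ n p.1 + ψ n p.2}) atTop (𝓝 0))
    (α : ℝ) (hα0 : 0 < α) (hα1 : α < 1)
    (q1 q2 : ℕ → ℝ)
    (hq1 : ∀ n, q1 n = sInf {x : ℝ | μ₁ {ω | x ≤ φ n ω} ≤ ENNReal.ofReal α})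
    (hq2 : ∀ n, q2 n = sInf {y : ℝ | μ₂ {ω | y ≤ ψ n ω} ≤ ENNReal.ofReal α}) :
    Tendsto (fun n => q1 n + q2 n) atTop atBot := by
  set β := ENNReal.ofReal α with hβdef
  have hβ0 : 0 < β := ENNReal.ofReal_pos.mpr hα0
  have hβ1 : β < 1 := by
    rw [hβdef, ← ENNReal.ofReal_one]
    exact (ENNReal.ofReal_lt_ofReal_iff one_pos).mpr hα1
  rw [tendsto_atBot]
  intro b
  have hββ : (0 : ENNReal) < β * β := ENNReal.mul_pos hβ0.ne' hβ0.ne'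
  filter_upwards [(hconv b).eventually (gt_mem_nhds hββ)] with n hn
  by_contra hgt
  push_neg at hgt
  set ε := (q1 n + q2 n - b) / 2 with hε
  have hε0 : 0 < ε := by simp [hε]; linarith
  set x := q1 n - ε with hx
  set y := q2 n - ε with hy
  have hxy : x + y = b := by simp [hx, hy, hε]; ring
  have hbdd1 := quantile_set_bddBelow μ₁ (φ n) β hβ1
  have hbdd2 := quantile_set_bddBelow μ₂ (ψ n) β hβ1
  have h1 : β < μ₁ {ω | x ≤ φ n ω} := by
    by_contra h
    push_neg at h
    have : q1 n ≤ x := by rw [hq1 n]; exact csInf_le hbdd1 h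
    simp [hx] at this; linarith
  have h2 : β < μ₂ {ω | y ≤ ψ n ω} := by
    by_contra h
    push_neg at h
    have : q2 n ≤ y := by rw [hq2 n]; exact csInf_le hbdd2 h
    simp [hy] at this; linarith
  have hsub : {ω | x ≤ φ n ω} ×ˢ {ω | y ≤ ψ n ω} ⊆ {p : Ω₁ × Ω₂ | b ≤ φ n p.1 + ψ n p.2} := by
    rintro ⟨ω₁, ω₂⟩ ⟨ha, hb⟩
    simp only [Set.mem_setOf_eq] at *
    linarith [hxy]
  have hprod : μ₁ {ω | x ≤ φ n ω} * μ₂ {ω | y ≤ ψ n ω}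
      ≤ (μ₁.prod μ₂) {p : Ω₁ × Ω₂ | b ≤ φ n p.1 + ψ n p.2} := by
    rw [← Measure.prod_prod]
    exact measure_mono hsub
  have : β * β < β * β :=
    lt_of_lt_of_le (ENNReal.mul_lt_mul h1 h2) (hprod.trans hn.le)
  exact lt_irrefl _ this
end

section
/- Let X, Y be Polish spaces, c : X × Y → [0,∞] lower semi-continuous, μ, ν Borel probability measures on X, Y, and π ∈ Π(μ,ν) a strongly c-monotone transport plan (i.e., there exist Borel functions φ : X → ℝ ∪ {-∞}, ψ : Y → ℝ ∪ {-∞} with φ(x) + ψ(y) ≤ c(x,y) everywhere and equality π-almost surely). Then π minimizes I(π') = ∫ c dπ' over all π' ∈ Π(μ,ν). -/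
open MeasureTheory Filter

private lemma clamp_add_nonneg {k a b : ℝ} (hab : 0 ≤ a + b) :
    0 ≤ max (min a k) (-k) + max (min b k) (-k) := by
  rcases le_total a k with h1 | h1 <;> rcases le_total b k with h2 | h2 <;>
    rcases le_total a (-k) with h3 | h3 <;> rcases le_total b (-k) with h4 | h4 <;>
    rw [min_def, min_def, max_def, max_def] <;> split_ifs <;> linarith

private lemma clamp_add_le {k a b : ℝ} (hk : 0 ≤ k) :
    max (min a k) (-k) + max (min b k) (-k) ≤ max (a + b) 0 := by
  rcases le_total a k with h1 | h1 <;> rcases le_total b k with h2 | h2 <;>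
    rcases le_total a (-k) with h3 | h3 <;> rcases le_total b (-k) with h4 | h4 <;>
    rcases le_total (a+b) 0 with h5 | h5 <;>
    rw [min_def, min_def, max_def, max_def, max_def] <;> split_ifs <;> linarith

/-- Main Theorem: a strongly c-monotone transport plan π ∈ Π(μ,ν)
minimizes the Monge–Kantorovich cost over all transport plans. -/
theorem strongly_cMonotone_is_optimal
    {X Y : Type*} [TopologicalSpace X] [PolishSpace X] [MeasurableSpace X] [BorelSpace X]
    [TopologicalSpace Y] [PolishSpace Y] [MeasurableSpace Y] [BorelSpace Y]
    (c : X × Y → ENNReal) (hc : LowerSemicontinuous c)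
    (μ : Measure X) (ν : Measure Y) [IsProbabilityMeasure μ] [IsProbabilityMeasure ν]
    (π : Measure (X × Y)) [IsProbabilityMeasure π]
    (hπ1 : π.map Prod.fst = μ) (hπ2 : π.map Prod.snd = ν)
    (φ : X → EReal) (ψ : Y → EReal) (hφm : Measurable φ) (hψm : Measurable ψ)
    (hφtop : ∀ x, φ x ≠ ⊤) (hψtop : ∀ y, ψ y ≠ ⊤)
    (hineq : ∀ x y, φ x + ψ y ≤ (c (x, y) : EReal))
    (heq : ∀ᵐ p ∂π, φ p.1 + ψ p.2 = (c p : EReal)) :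
    ∀ π' : Measure (X × Y), IsProbabilityMeasure π' →
      π'.map Prod.fst = μ → π'.map Prod.snd = ν →
      ∫⁻ p, c p ∂π ≤ ∫⁻ p, c p ∂π' := by
  intro π' hπ' hπ'1 hπ'2
  have hcm : Measurable c := hc.measurable
  -- clamped potentials
  set r : ℕ → X → ℝ := fun k x =>
    if φ x = ⊥ then -(k : ℝ) else max (min ((φ x).toReal) k) (-(k : ℝ)) with hrdef
  set s : ℕ → Y → ℝ := fun k y =>
    if ψ y = ⊥ then -(k : ℝ) else max (min ((ψ y).toReal) k) (-(k : ℝ)) with hsdef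
  have hreqb : ∀ (k : ℕ) (x : X), φ x = ⊥ → r k x = -(k : ℝ) := fun k x h => if_pos h
  have hreq : ∀ (k : ℕ) (x : X), φ x ≠ ⊥ →
      r k x = max (min ((φ x).toReal) (k : ℝ)) (-(k : ℝ)) := fun k x h => if_neg h
  have hseqb : ∀ (k : ℕ) (y : Y), ψ y = ⊥ → s k y = -(k : ℝ) := fun k y h => if_pos h
  have hseq : ∀ (k : ℕ) (y : Y), ψ y ≠ ⊥ →
      s k y = max (min ((ψ y).toReal) (k : ℝ)) (-(k : ℝ)) := fun k y h => if_neg h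
  have hrmeas : ∀ k, Measurable (r k) := by
    intro k
    exact Measurable.ite (hφm (measurableSet_singleton ⊥)) measurable_const
      ((hφm.ereal_toReal.min measurable_const).max measurable_const)
  have hsmeas : ∀ k, Measurable (s k) := by
    intro k
    exact Measurable.ite (hψm (measurableSet_singleton ⊥)) measurable_const
      ((hψm.ereal_toReal.min measurable_const).max measurable_const)
  have hrb : ∀ (k : ℕ) (x : X), -(k : ℝ) ≤ r k x ∧ r k x ≤ (k : ℝ) := by
    intro k x
    have hk : (0:ℝ) ≤ (k : ℝ) := Nat.cast_nonneg k
    by_cases h : φ x = ⊥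
    · rw [hreqb k x h]
      exact ⟨le_refl _, by linarith⟩
    · rw [hreq k x h]
      exact ⟨le_max_right _ _, max_le (min_le_right _ _) (by linarith)⟩
  have hsb : ∀ (k : ℕ) (y : Y), -(k : ℝ) ≤ s k y ∧ s k y ≤ (k : ℝ) := by
    intro k y
    have hk : (0:ℝ) ≤ (k : ℝ) := Nat.cast_nonneg k
    by_cases h : ψ y = ⊥
    · rw [hseqb k y h]
      exact ⟨le_refl _, by linarith⟩
    · rw [hseq k y h]
      exact ⟨le_max_right _ _, max_le (min_le_right _ _) (by linarith)⟩
  -- a.e. structure under π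
  have hae : ∀ᵐ p ∂π, φ p.1 ≠ ⊥ ∧ ψ p.2 ≠ ⊥ ∧ c p ≠ ⊤ ∧
      (φ p.1).toReal + (ψ p.2).toReal = (c p).toReal := by
    filter_upwards [heq] with p hp
    have hφb : φ p.1 ≠ ⊥ := by
      intro h; rw [h, EReal.bot_add] at hp
      exact EReal.coe_ennreal_ne_bot _ hp.symm
    have hψb : ψ p.2 ≠ ⊥ := by
      intro h; rw [h, EReal.add_bot] at hp
      exact EReal.coe_ennreal_ne_bot _ hp.symm
    have hct : c p ≠ ⊤ := by
      intro h
      rw [h, EReal.coe_ennreal_top] at hp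
      exact (EReal.add_lt_top (hφtop _) (hψtop _)).ne hp
    refine ⟨hφb, hψb, hct, ?_⟩
    have h1 := EReal.toReal_add (hφtop _) hφb (hψtop _) hψb
    rw [hp, EReal.toReal_coe_ennreal] at h1
    exact h1.symm
  -- a.e. nonnegativity of clamped sums under π
  have hsign : ∀ k, 0 ≤ᵐ[π] fun p => r k p.1 + s k p.2 := by
    intro k
    filter_upwards [hae] with p hp
    obtain ⟨h1, h2, h3, h4⟩ := hp
    simp only [Pi.zero_apply]
    rw [hreq k p.1 h1, hseq k p.2 h2]
    exact clamp_add_nonneg (by rw [h4]; exact ENNReal.toReal_nonneg)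
  -- everywhere upper bound
  have hub : ∀ (k : ℕ) (x y), r k x + s k y ≤
      (min (c (x, y)) (ENNReal.ofReal (2 * k))).toReal := by
    intro k x y
    have hk : (0:ℝ) ≤ k := Nat.cast_nonneg k
    by_cases hx : φ x = ⊥
    · have hle : r k x + s k y ≤ 0 := by
        have h2 := (hsb k y).2
        rw [hreqb k x hx]; linarith
      exact hle.trans ENNReal.toReal_nonneg
    by_cases hy : ψ y = ⊥
    · have hle : r k x + s k y ≤ 0 := by
        have h2 := (hrb k x).2
        rw [hseqb k y hy]; linarith
      exact hle.trans ENNReal.toReal_nonneg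
    -- both finite
    have hx' : r k x = max (min ((φ x).toReal) (k:ℝ)) (-(k:ℝ)) := hreq k x hx
    have hy' : s k y = max (min ((ψ y).toReal) (k:ℝ)) (-(k:ℝ)) := hseq k y hy
    by_cases hct : c (x, y) = ⊤
    · have : min (c (x, y)) (ENNReal.ofReal (2 * k)) = ENNReal.ofReal (2 * k) := by
        simp [hct]
      rw [this, ENNReal.toReal_ofReal (by linarith), hx', hy']
      have b1 := max_le (min_le_right ((φ x).toReal) (k:ℝ)) (by linarith : -(k:ℝ) ≤ (k:ℝ))
      have b2 := max_le (min_le_right ((ψ y).toReal) (k:ℝ)) (by linarith : -(k:ℝ) ≤ (k:ℝ))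
      linarith
    · have hab : (φ x).toReal + (ψ y).toReal ≤ (c (x, y)).toReal := by
        have h1 : ((c (x, y) : EReal)).toReal = (c (x, y)).toReal := EReal.toReal_coe_ennreal
        have h2 : (((φ x).toReal : ℝ) : EReal) = φ x := EReal.coe_toReal (hφtop x) hx
        have h3 : (((ψ y).toReal : ℝ) : EReal) = ψ y := EReal.coe_toReal (hψtop y) hy
        have h4 : ((c (x, y) : EReal)) = (((c (x, y)).toReal : ℝ) : EReal) := by
          rw [← h1]
          exact (EReal.coe_toReal (by simp [EReal.coe_ennreal_eq_top_iff, hct])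
            (EReal.coe_ennreal_ne_bot _)).symm
        have := hineq x y
        rw [← h2, ← h3, ← EReal.coe_add, h4, EReal.coe_le_coe_iff] at this
        exact this
      have hcr : (0:ℝ) ≤ (c (x, y)).toReal := ENNReal.toReal_nonneg
      rw [hx', hy', ENNReal.toReal_min hct ENNReal.ofReal_ne_top,
        ENNReal.toReal_ofReal (by linarith)]
      refine le_min ?_ ?_
      · calc max (min ((φ x).toReal) (k:ℝ)) (-(k:ℝ)) + max (min ((ψ y).toReal) (k:ℝ)) (-(k:ℝ))
            ≤ max ((φ x).toReal + (ψ y).toReal) 0 := clamp_add_le hk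
          _ ≤ (c (x, y)).toReal := max_le hab hcr
      · have b1 := max_le (min_le_right ((φ x).toReal) (k:ℝ)) (by linarith : -(k:ℝ) ≤ (k:ℝ))
        have b2 := max_le (min_le_right ((ψ y).toReal) (k:ℝ)) (by linarith : -(k:ℝ) ≤ (k:ℝ))
        linarith
  -- integrability of clamped sums
  have hint : ∀ (σ : Measure (X × Y)) (_ : IsProbabilityMeasure σ) (k : ℕ),
      Integrable (fun p : X × Y => r k p.1) σ ∧ Integrable (fun p : X × Y => s k p.2) σ := by
    intro σ hσ k
    constructor
    · refine (integrable_const ((k : ℝ))).mono'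
        (((hrmeas k).comp measurable_fst).aestronglyMeasurable) ?_
      refine ae_of_all _ fun p => ?_
      rw [Real.norm_eq_abs, abs_le]
      exact ⟨(hrb k p.1).1, (hrb k p.1).2⟩
    · refine (integrable_const ((k : ℝ))).mono'
        (((hsmeas k).comp measurable_snd).aestronglyMeasurable) ?_
      refine ae_of_all _ fun p => ?_
      rw [Real.norm_eq_abs, abs_le]
      exact ⟨(hsb k p.2).1, (hsb k p.2).2⟩
  -- marginal decomposition of the integral
  have hdecomp : ∀ (σ : Measure (X × Y)) (_ : IsProbabilityMeasure σ),
      σ.map Prod.fst = μ → σ.map Prod.snd = ν → ∀ k,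
      ∫ p, (r k p.1 + s k p.2) ∂σ = ∫ x, r k x ∂μ + ∫ y, s k y ∂ν := by
    intro σ hσ h1 h2 k
    obtain ⟨hi1, hi2⟩ := hint σ hσ k
    rw [integral_add hi1 hi2]
    congr 1
    · rw [← h1, integral_map measurable_fst.aemeasurable (hrmeas k).aestronglyMeasurable]
    · rw [← h2, integral_map measurable_snd.aemeasurable (hsmeas k).aestronglyMeasurable]
  -- the π' upper bound
  have hQle : ∀ k : ℕ, ENNReal.ofReal (∫ p, (r k p.1 + s k p.2) ∂π) ≤ ∫⁻ p, c p ∂π' := by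
    intro k
    have hEq : ∫ p, (r k p.1 + s k p.2) ∂π = ∫ p, (r k p.1 + s k p.2) ∂π' := by
      rw [hdecomp π inferInstance hπ1 hπ2 k, hdecomp π' hπ' hπ'1 hπ'2 k]
    rw [hEq]
    obtain ⟨hi1, hi2⟩ := hint π' hπ' k
    have hintc : Integrable (fun p => (min (c p) (ENNReal.ofReal (2 * k))).toReal) π' := by
      refine (integrable_const ((2 * k : ℝ))).mono'
        ((hcm.min measurable_const).ennreal_toReal.aestronglyMeasurable) ?_
      refine ae_of_all _ fun p => ?_
      rw [Real.norm_eq_abs, abs_of_nonneg ENNReal.toReal_nonneg]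
      calc (min (c p) (ENNReal.ofReal (2 * k))).toReal
          ≤ (ENNReal.ofReal (2 * k)).toReal :=
            ENNReal.toReal_mono ENNReal.ofReal_ne_top (min_le_right _ _)
        _ = 2 * k := ENNReal.toReal_ofReal (by positivity)
    calc ENNReal.ofReal (∫ p, (r k p.1 + s k p.2) ∂π')
        ≤ ENNReal.ofReal (∫ p, (min (c p) (ENNReal.ofReal (2 * k))).toReal ∂π') := by
          refine ENNReal.ofReal_le_ofReal (integral_mono (hi1.add hi2) hintc ?_)
          intro p
          exact hub k p.1 p.2
      _ = ∫⁻ p, ENNReal.ofReal ((min (c p) (ENNReal.ofReal (2 * k))).toReal) ∂π' :=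
          ofReal_integral_eq_lintegral_ofReal hintc
            (ae_of_all _ fun p => ENNReal.toReal_nonneg)
      _ = ∫⁻ p, min (c p) (ENNReal.ofReal (2 * k)) ∂π' := by
          refine lintegral_congr fun p => ENNReal.ofReal_toReal ?_
          exact ne_top_of_le_ne_top ENNReal.ofReal_ne_top (min_le_right _ _)
      _ ≤ ∫⁻ p, c p ∂π' := lintegral_mono fun p => min_le_left _ _
  -- the π lower bound via Fatou
  have hπside : ∫⁻ p, c p ∂π ≤
      liminf (fun k : ℕ => ENNReal.ofReal (∫ p, (r k p.1 + s k p.2) ∂π)) atTop := by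
    have hFmeas : ∀ k : ℕ, Measurable fun p : X × Y => ENNReal.ofReal (r k p.1 + s k p.2) := by
      intro k
      exact (((hrmeas k).comp measurable_fst).add ((hsmeas k).comp measurable_snd)).ennreal_ofReal
    have h1 : ∫⁻ p, c p ∂π =
        ∫⁻ p, liminf (fun k : ℕ => ENNReal.ofReal (r k p.1 + s k p.2)) atTop ∂π := by
      refine lintegral_congr_ae ?_
      filter_upwards [hae] with p hp
      obtain ⟨hb1, hb2, hct, habc⟩ := hp
      have hten : Tendsto (fun k : ℕ => ENNReal.ofReal (r k p.1 + s k p.2)) atTop (nhds (c p)) := by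
        have hev : ∀ᶠ k : ℕ in atTop, ENNReal.ofReal (r k p.1 + s k p.2) = c p := by
          filter_upwards [eventually_ge_atTop (⌈|(φ p.1).toReal|⌉₊),
            eventually_ge_atTop (⌈|(ψ p.2).toReal|⌉₊)] with k hk1 hk2
          have ha : |(φ p.1).toReal| ≤ (k : ℝ) := (Nat.ceil_le.mp hk1)
          have hb : |(ψ p.2).toReal| ≤ (k : ℝ) := (Nat.ceil_le.mp hk2)
          rw [abs_le] at ha hb
          have e1 : r k p.1 = (φ p.1).toReal := by
            rw [hreq k p.1 hb1, min_eq_left ha.2, max_eq_left ha.1]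
          have e2 : s k p.2 = (ψ p.2).toReal := by
            rw [hseq k p.2 hb2, min_eq_left hb.2, max_eq_left hb.1]
          rw [e1, e2, habc, ENNReal.ofReal_toReal hct]
        exact Tendsto.congr' (by filter_upwards [hev] with k hk; exact hk.symm) tendsto_const_nhds
      rw [hten.liminf_eq]
    rw [h1]
    refine le_trans (lintegral_liminf_le hFmeas) (liminf_le_liminf ?_)
    refine Eventually.of_forall fun k => ?_
    obtain ⟨hi1, hi2⟩ := hint π inferInstance k
    have hi12 : Integrable (fun p : X × Y => r k p.1 + s k p.2) π := hi1.add hi2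
    exact (ofReal_integral_eq_lintegral_ofReal hi12 (hsign k)).ge
  refine hπside.trans ?_
  calc liminf (fun k : ℕ => ENNReal.ofReal (∫ p, (r k p.1 + s k p.2) ∂π)) atTop
      ≤ liminf (fun _ : ℕ => ∫⁻ p, c p ∂π') atTop :=
        liminf_le_liminf (Eventually.of_forall fun k => hQle k)
    _ = ∫⁻ p, c p ∂π' := liminf_const _
end

section
/- Let X, Y be Polish spaces, c : X × Y → [0,∞] lower semi-continuous, π ∈ Π(μ,ν) strongly c-monotone with potentials φ, ψ, and π₀ ∈ Π(μ,ν) any transport plan with I(π₀) < ∞. Setting ξ(x,y) = φ(x) + ψ(y), the integrals E_π(ξ) and E_{π₀}(ξ) exist (in ℝ ∪ {±∞}) and satisfy E_π(ξ) = E_{π₀}(ξ); consequently I(π) = E_π(ξ) = E_{π₀}(ξ) ≤ I(π₀). -/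
open MeasureTheory Filter Topology

/-- Positive part of an extended real number, as an element of [0,∞]. -/
noncomputable def eposPart (x : EReal) : ENNReal :=
  if x = ⊤ then ⊤ else ENNReal.ofReal x.toReal

/-- The (possibly infinite) integral of an (ℝ ∪ {±∞})-valued function:
integral of the positive part minus integral of the negative part. -/
noncomputable def eIntegral {Ω : Type*} [MeasurableSpace Ω]
    (μ : Measure Ω) (f : Ω → EReal) : EReal :=
  ((∫⁻ ω, eposPart (f ω) ∂μ : ENNReal) : EReal) -
    ((∫⁻ ω, eposPart (-(f ω)) ∂μ : ENNReal) : EReal)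

/-- The integral of `f` exists (is not of the form ∞ - ∞). -/
def EIntegralExists {Ω : Type*} [MeasurableSpace Ω]
    (μ : Measure Ω) (f : Ω → EReal) : Prop :=
  (∫⁻ ω, eposPart (f ω) ∂μ) ≠ ⊤ ∨ (∫⁻ ω, eposPart (-(f ω)) ∂μ) ≠ ⊤


section AuxiliaryLemmas

section clamp

def clampR (n : ℕ) (t : ℝ) : ℝ := max (min t n) (-(n : ℝ))

lemma clampR_le (n : ℕ) (t : ℝ) : clampR n t ≤ n := by
  unfold clampR
  rcases le_total t (n : ℝ) with h | h <;>
    simp [min_def, max_def] <;> split_ifs <;> push_cast <;> linarith [Nat.cast_nonneg (α := ℝ) n]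

lemma neg_le_clampR (n : ℕ) (t : ℝ) : -(n : ℝ) ≤ clampR n t := le_max_right _ _

lemma clampR_mono (n : ℕ) {t s : ℝ} (h : t ≤ s) : clampR n t ≤ clampR n s :=
  max_le_max (min_le_min_right _ h) le_rfl

lemma clampR_neg (n : ℕ) (t : ℝ) : clampR n (-t) = -clampR n t := by
  unfold clampR
  rcases le_total t (n : ℝ) with h1 | h1 <;> rcases le_total (-(n:ℝ)) t with h2 | h2 <;>
    simp [min_def, max_def] <;> split_ifs <;> linarith [Nat.cast_nonneg (α := ℝ) n]

lemma clampR_eq_self (n : ℕ) {t : ℝ} (h1 : -(n:ℝ) ≤ t) (h2 : t ≤ n) : clampR n t = t := by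
  unfold clampR
  rw [min_eq_left h2, max_eq_left h1]

lemma clampR_le_self (n : ℕ) {t : ℝ} (h : -(n:ℝ) ≤ t) : clampR n t ≤ t := by
  unfold clampR
  rcases le_total t (n : ℝ) with h1 | h1
  · rw [min_eq_left h1, max_eq_left h]
  · rw [min_eq_right h1]; exact le_trans (max_le h1 (by linarith)) le_rfl

lemma clampR_eq_top (n : ℕ) {t : ℝ} (h : (n:ℝ) ≤ t) : clampR n t = n := by
  unfold clampR
  rw [min_eq_right h, max_eq_left (by linarith [Nat.cast_nonneg (α := ℝ) n])]

lemma clampR_add_nonneg (n : ℕ) {a b : ℝ} (h : 0 ≤ a + b) : 0 ≤ clampR n a + clampR n b := by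
  have : clampR n (-a) ≤ clampR n b := clampR_mono n (by linarith)
  rw [clampR_neg] at this; linarith

lemma clampR_add_le (n : ℕ) {a b : ℝ} (h : 0 ≤ a + b) : clampR n a + clampR n b ≤ a + b := by
  rcases le_total (-(n:ℝ)) a with ha | ha
  · rcases le_total (-(n:ℝ)) b with hb | hb
    · linarith [clampR_le_self n ha, clampR_le_self n hb]
    · have han : (n:ℝ) ≤ a := by linarith
      rw [clampR_eq_top n han]
      have : clampR n b ≤ -(n:ℝ) := by
        have := clampR_mono n (show b ≤ -(n:ℝ) from hb)
        calc clampR n b ≤ clampR n (-(n:ℝ)) := this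
        _ = -clampR n (n:ℝ) := by rw [← clampR_neg]
        _ = -(n:ℝ) := by rw [clampR_eq_top n le_rfl]
      linarith
  · have hbn : (n:ℝ) ≤ b := by linarith
    rw [clampR_eq_top n hbn]
    have : clampR n a ≤ -(n:ℝ) := by
      have h2 := clampR_mono n (show a ≤ -(n:ℝ) from ha)
      calc clampR n a ≤ clampR n (-(n:ℝ)) := h2
      _ = -clampR n (n:ℝ) := by rw [← clampR_neg]
      _ = -(n:ℝ) := by rw [clampR_eq_top n le_rfl]
    linarith

lemma clampR_add_nonpos (n : ℕ) {a b : ℝ} (h : a + b ≤ 0) : clampR n a + clampR n b ≤ 0 := by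
  have := clampR_add_nonneg n (a := -a) (b := -b) (by linarith)
  rw [clampR_neg, clampR_neg] at this; linarith

lemma le_clampR_add (n : ℕ) {a b : ℝ} (h : a + b ≤ 0) : a + b ≤ clampR n a + clampR n b := by
  have := clampR_add_le n (a := -a) (b := -b) (by linarith)
  rw [clampR_neg, clampR_neg] at this; linarith

end clamp

noncomputable def Ftr (n : ℕ) (a : EReal) : ℝ :=
  if a = ⊤ then n else if a = ⊥ then -(n:ℝ) else clampR n a.toReal

lemma Ftr_coe (n : ℕ) (t : ℝ) : Ftr n (t : EReal) = clampR n t := by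
  simp [Ftr, EReal.coe_ne_top, EReal.coe_ne_bot]

lemma Ftr_measurable (n : ℕ) : Measurable (Ftr n) := by
  unfold Ftr
  apply Measurable.ite (measurableSet_singleton ⊤) measurable_const
  apply Measurable.ite (measurableSet_singleton ⊥) measurable_const
  exact (continuous_max.comp (Continuous.prodMk (continuous_min.comp
    (Continuous.prodMk continuous_id continuous_const)) continuous_const)).measurable.comp
    measurable_ereal_toReal

lemma clampR_le' (n : ℕ) (t : ℝ) : clampR n t ≤ n := by
  unfold clampR
  exact max_le (le_trans (min_le_right _ _) le_rfl) (by linarith [Nat.cast_nonneg (α := ℝ) n])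

lemma Ftr_le (n : ℕ) (a : EReal) : Ftr n a ≤ n := by
  unfold Ftr; split_ifs <;> [skip; linarith [Nat.cast_nonneg (α := ℝ) n]; exact clampR_le' n _]
  exact le_rfl

lemma neg_le_Ftr (n : ℕ) (a : EReal) : -(n:ℝ) ≤ Ftr n a := by
  unfold Ftr; split_ifs <;> [linarith [Nat.cast_nonneg (α := ℝ) n]; exact le_rfl; exact le_max_right _ _]

lemma Ftr_abs_le (n : ℕ) (a : EReal) : |Ftr n a| ≤ n :=
  abs_le.2 ⟨neg_le_Ftr n a, Ftr_le n a⟩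

lemma Ftr_neg (n : ℕ) (a : EReal) : Ftr n (-a) = -Ftr n a := by
  induction a using EReal.rec with
  | bot => simp [Ftr]
  | top => simp [Ftr]
  | coe t =>
    rw [← EReal.coe_neg, Ftr_coe, Ftr_coe]
    show clampR n (-t) = _
    unfold clampR
    rcases le_total t (n : ℝ) with h1 | h1 <;> rcases le_total (-(n:ℝ)) t with h2 | h2 <;>
      simp [min_def, max_def] <;> split_ifs <;> linarith [Nat.cast_nonneg (α := ℝ) n]

lemma Ftr_mono (n : ℕ) {a b : EReal} (h : a ≤ b) : Ftr n a ≤ Ftr n b := by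
  by_cases hb : b = ⊤
  · rw [hb]; simp only [Ftr, if_pos rfl]; exact Ftr_le n a
  by_cases ha : a = ⊥
  · rw [ha]; simp only [Ftr, if_neg bot_ne_top, if_pos rfl]; exact neg_le_Ftr n b
  have ha' : a ≠ ⊤ := fun h' => hb (top_le_iff.1 (h' ▸ h))
  have hb' : b ≠ ⊥ := fun h' => ha (le_bot_iff.1 (h' ▸ h))
  simp only [Ftr, if_neg ha', if_neg ha, if_neg hb, if_neg hb']
  have := EReal.toReal_le_toReal h ha hb
  exact max_le_max (min_le_min_right _ this) le_rfl

-- eposPart lemmas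
lemma eposPart_coe (r : ℝ) : eposPart (r : EReal) = ENNReal.ofReal r := by
  simp [eposPart, EReal.coe_ne_top]

lemma eposPart_top : eposPart ⊤ = ⊤ := rfl

lemma eposPart_mono {x y : EReal} (h : x ≤ y) : eposPart x ≤ eposPart y := by
  by_cases hy : y = ⊤
  · simp [eposPart, hy]
  have hx : x ≠ ⊤ := fun h' => hy (top_le_iff.1 (h' ▸ h))
  by_cases hxb : x = ⊥
  · simp [eposPart, hxb, hy]
  have hyb : y ≠ ⊥ := fun h' => hxb (le_bot_iff.1 (h' ▸ h))
  simp only [eposPart, if_neg hx, if_neg hy]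
  exact ENNReal.ofReal_le_ofReal (EReal.toReal_le_toReal h hxb hy)

lemma eposPart_nonpos {x : EReal} (h : x ≤ 0) : eposPart x = 0 := by
  have hx : x ≠ ⊤ := fun h' => by simp [h'] at h
  by_cases hxb : x = ⊥
  · simp [eposPart, hxb]
  simp only [eposPart, if_neg hx]
  rw [ENNReal.ofReal_eq_zero]
  exact EReal.toReal_le_toReal h hxb (by simp) |>.trans_eq EReal.toReal_zero

lemma eposPart_coe_ennreal (c : ENNReal) : eposPart (c : EReal) = c := by
  by_cases hc : c = ⊤
  · simp [hc, eposPart]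
  · rw [show ((c : EReal)) = ((c.toReal : ℝ) : EReal) by
      conv_lhs => rw [← ENNReal.ofReal_toReal hc]
      rw [EReal.coe_ennreal_ofReal, max_eq_left ENNReal.toReal_nonneg]]
    rw [eposPart_coe, ENNReal.ofReal_toReal hc]

lemma coe_ennreal_toReal' {a : ENNReal} (ha : a ≠ ⊤) : ((a.toReal : ℝ) : EReal) = (a : EReal) := by
  conv_rhs => rw [← ENNReal.ofReal_toReal ha]
  rw [EReal.coe_ennreal_ofReal, max_eq_left ENNReal.toReal_nonneg]

lemma Ftr_bot (n : ℕ) : Ftr n (⊥ : EReal) = -(n:ℝ) := by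
  simp [Ftr]

section ELevel

lemma EL1 {x y : EReal} (hx : x ≠ ⊤) (hy : y ≠ ⊤) (n : ℕ) (h : 0 ≤ x + y) :
    0 ≤ Ftr n x + Ftr n y ∧ ((Ftr n x + Ftr n y : ℝ) : EReal) ≤ x + y := by
  by_cases hxb : x = ⊥
  · rw [hxb, EReal.bot_add] at h; exact absurd h (by simp)
  by_cases hyb : y = ⊥
  · rw [hyb, EReal.add_bot] at h; exact absurd h (by simp)
  lift x to ℝ using ⟨hx, hxb⟩
  lift y to ℝ using ⟨hy, hyb⟩
  rw [← EReal.coe_add, ← EReal.coe_zero, EReal.coe_le_coe_iff] at h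
  rw [Ftr_coe, Ftr_coe, ← EReal.coe_add, EReal.coe_le_coe_iff]
  exact ⟨clampR_add_nonneg n h, clampR_add_le n h⟩

lemma EL2 {x y : EReal} (hx : x ≠ ⊤) (hy : y ≠ ⊤) (n : ℕ) (h : x + y ≤ 0) :
    Ftr n x + Ftr n y ≤ 0 ∧ x + y ≤ ((Ftr n x + Ftr n y : ℝ) : EReal) := by
  by_cases hxb : x = ⊥
  · refine ⟨?_, by rw [hxb, EReal.bot_add]; exact bot_le⟩
    rw [hxb, Ftr_bot]; linarith [Ftr_le n y]
  by_cases hyb : y = ⊥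
  · refine ⟨?_, by rw [hyb, EReal.add_bot]; exact bot_le⟩
    rw [hyb, Ftr_bot]; linarith [Ftr_le n x]
  lift x to ℝ using ⟨hx, hxb⟩
  lift y to ℝ using ⟨hy, hyb⟩
  rw [← EReal.coe_add, ← EReal.coe_zero, EReal.coe_le_coe_iff] at h
  rw [Ftr_coe, Ftr_coe, ← EReal.coe_add, EReal.coe_le_coe_iff]
  exact ⟨clampR_add_nonpos n h, le_clampR_add n h⟩

lemma PB1 {x y : EReal} (hx : x ≠ ⊤) (hy : y ≠ ⊤) (n : ℕ) :
    ENNReal.ofReal (Ftr n x + Ftr n y) ≤ eposPart (x + y) := by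
  rcases le_total 0 (x + y) with h | h
  · obtain ⟨-, h2⟩ := EL1 hx hy n h
    calc ENNReal.ofReal (Ftr n x + Ftr n y) = eposPart _ := (eposPart_coe _).symm
    _ ≤ _ := eposPart_mono h2
  · obtain ⟨h1, -⟩ := EL2 hx hy n h
    rw [ENNReal.ofReal_eq_zero.2 h1]; exact zero_le

lemma PB2 {x y : EReal} (hx : x ≠ ⊤) (hy : y ≠ ⊤) (n : ℕ) :
    ENNReal.ofReal (-(Ftr n x + Ftr n y)) ≤ eposPart (-(x + y)) := by
  rcases le_total 0 (x + y) with h | h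
  · obtain ⟨h1, -⟩ := EL1 hx hy n h
    rw [ENNReal.ofReal_eq_zero.2 (by linarith)]; exact zero_le
  · obtain ⟨-, h2⟩ := EL2 hx hy n h
    calc ENNReal.ofReal (-(Ftr n x + Ftr n y))
        = eposPart ((-(Ftr n x + Ftr n y) : ℝ) : EReal) := (eposPart_coe _).symm
    _ ≤ eposPart (-(x+y)) := by
        apply eposPart_mono
        rw [EReal.coe_neg, EReal.neg_le_neg_iff]
        exact h2

lemma PB3 {x y : EReal} (hx : x ≠ ⊤) (hy : y ≠ ⊤) :
    Tendsto (fun n => ENNReal.ofReal (Ftr n x + Ftr n y)) atTop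
    (𝓝 (eposPart (x + y))) := by
  by_cases hxb : x = ⊥
  · subst hxb
    have hz : ∀ n : ℕ, ENNReal.ofReal (Ftr n (⊥:EReal) + Ftr n y) = 0 := fun n => by
      rw [Ftr_bot]
      exact ENNReal.ofReal_eq_zero.2 (by linarith [Ftr_le n y])
    rw [EReal.bot_add, eposPart_nonpos bot_le]
    simp only [hz]
    exact tendsto_const_nhds
  by_cases hyb : y = ⊥
  · subst hyb
    have hz : ∀ n : ℕ, ENNReal.ofReal (Ftr n x + Ftr n (⊥:EReal)) = 0 := fun n => by
      rw [Ftr_bot]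
      exact ENNReal.ofReal_eq_zero.2 (by linarith [Ftr_le n x])
    rw [EReal.add_bot, eposPart_nonpos bot_le]
    simp only [hz]
    exact tendsto_const_nhds
  · lift x to ℝ using ⟨hx, hxb⟩
    lift y to ℝ using ⟨hy, hyb⟩
    rw [← EReal.coe_add, eposPart_coe]
    apply tendsto_const_nhds.congr'
    filter_upwards [eventually_ge_atTop (⌈|x|⌉₊ ⊔ ⌈|y|⌉₊)] with n hn
    have hxn : |x| ≤ n := le_trans (Nat.le_ceil _) (by exact_mod_cast le_sup_left.trans hn)
    have hyn : |y| ≤ n := le_trans (Nat.le_ceil _) (by exact_mod_cast le_sup_right.trans hn)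
    rw [Ftr_coe, Ftr_coe, clampR_eq_self n (by linarith [(abs_le.1 hxn).1]) (abs_le.1 hxn).2,
      clampR_eq_self n (by linarith [(abs_le.1 hyn).1]) (abs_le.1 hyn).2]

lemma tendsto_ofReal_sub_top (C : ℝ) :
    Tendsto (fun n : ℕ => ENNReal.ofReal ((n : ℝ) - C)) atTop (𝓝 ⊤) :=
  ENNReal.tendsto_ofReal_atTop.comp
    ((tendsto_atTop_add_const_right atTop (-C) tendsto_natCast_atTop_atTop).congr
      (fun n => by ring_nf))

lemma Ftr_le_abs_toReal (n : ℕ) {a : EReal} (ha : a ≠ ⊤) : Ftr n a ≤ |a.toReal| := by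
  by_cases hb : a = ⊥
  · rw [hb, Ftr_bot]
    simp only [EReal.toReal_bot, abs_zero]
    linarith [Nat.cast_nonneg (α := ℝ) n]
  · lift a to ℝ using ⟨ha, hb⟩
    rw [Ftr_coe, EReal.toReal_coe]
    unfold clampR
    apply max_le
    · exact le_trans (min_le_left _ _) (le_abs_self _)
    · exact le_trans (neg_nonpos.2 (Nat.cast_nonneg n)) (abs_nonneg a)

lemma PB4 {x y : EReal} (hx : x ≠ ⊤) (hy : y ≠ ⊤) :
    Tendsto (fun n => ENNReal.ofReal (-(Ftr n x + Ftr n y))) atTop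
    (𝓝 (eposPart (-(x + y)))) := by
  by_cases hxb : x = ⊥
  · subst hxb
    rw [EReal.bot_add, show -(⊥ : EReal) = (⊤ : EReal) from rfl,
      show eposPart ⊤ = ⊤ from rfl]
    apply tendsto_nhds_top_mono (tendsto_ofReal_sub_top |y.toReal|)
    filter_upwards with n
    apply ENNReal.ofReal_le_ofReal
    rw [Ftr_bot]
    linarith [Ftr_le_abs_toReal n hy]
  by_cases hyb : y = ⊥
  · subst hyb
    rw [EReal.add_bot, show -(⊥ : EReal) = (⊤ : EReal) from rfl,
      show eposPart ⊤ = ⊤ from rfl]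
    apply tendsto_nhds_top_mono (tendsto_ofReal_sub_top |x.toReal|)
    filter_upwards with n
    apply ENNReal.ofReal_le_ofReal
    rw [Ftr_bot]
    linarith [Ftr_le_abs_toReal n hx]
  · lift x to ℝ using ⟨hx, hxb⟩
    lift y to ℝ using ⟨hy, hyb⟩
    rw [← EReal.coe_add, ← EReal.coe_neg, eposPart_coe]
    apply tendsto_const_nhds.congr'
    filter_upwards [eventually_ge_atTop (⌈|x|⌉₊ ⊔ ⌈|y|⌉₊)] with n hn
    have hxn : |x| ≤ n := le_trans (Nat.le_ceil _) (by exact_mod_cast le_sup_left.trans hn)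
    have hyn : |y| ≤ n := le_trans (Nat.le_ceil _) (by exact_mod_cast le_sup_right.trans hn)
    rw [Ftr_coe, Ftr_coe, clampR_eq_self n (by linarith [(abs_le.1 hxn).1]) (abs_le.1 hxn).2,
      clampR_eq_self n (by linarith [(abs_le.1 hyn).1]) (abs_le.1 hyn).2]
end ELevel

lemma lintegral_tendsto_squeeze {Ω : Type*} [MeasurableSpace Ω] (ρ : Measure Ω)
    (g : ℕ → Ω → ENNReal) (G : Ω → ENNReal) (hm : ∀ n, Measurable (g n))
    (hle : ∀ n ω, g n ω ≤ G ω) (hlim : ∀ ω, Tendsto (fun n => g n ω) atTop (𝓝 (G ω))) :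
    Tendsto (fun n => ∫⁻ ω, g n ω ∂ρ) atTop (𝓝 (∫⁻ ω, G ω ∂ρ)) := by
  refine tendsto_of_le_liminf_of_limsup_le ?_ ?_ (by isBoundedDefault) (by isBoundedDefault)
  · calc ∫⁻ ω, G ω ∂ρ = ∫⁻ ω, liminf (fun n => g n ω) atTop ∂ρ :=
        lintegral_congr fun ω => ((hlim ω).liminf_eq).symm
    _ ≤ liminf (fun n => ∫⁻ ω, g n ω ∂ρ) atTop := lintegral_liminf_le hm
  · exact limsup_le_of_le (by isBoundedDefault)
      (Eventually.of_forall fun n => lintegral_mono fun ω => hle n ω)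

lemma integrable_of_bound {Ω : Type*} [MeasurableSpace Ω] (ρ : Measure Ω)
    [IsFiniteMeasure ρ] (f : Ω → ℝ) (hf : Measurable f) (C : ℝ) (hC : ∀ ω, |f ω| ≤ C) :
    Integrable f ρ :=
  (integrable_const C).mono' hf.aestronglyMeasurable (Eventually.of_forall fun ω => by
    simpa using hC ω)

lemma integral_sum_marginals {X Y : Type*} [MeasurableSpace X] [MeasurableSpace Y]
    (μ : Measure X) (ν : Measure Y) (ρ : Measure (X × Y)) [IsProbabilityMeasure ρ]
    (h1 : ρ.map Prod.fst = μ) (h2 : ρ.map Prod.snd = ν)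
    (f : X → ℝ) (g : Y → ℝ) (hf : Measurable f) (hg : Measurable g)
    (C : ℝ) (hfb : ∀ x, |f x| ≤ C) (hgb : ∀ y, |g y| ≤ C) :
    ∫ p, (f p.1 + g p.2) ∂ρ = (∫ x, f x ∂μ) + ∫ y, g y ∂ν := by
  have hif : Integrable (fun p : X × Y => f p.1) ρ :=
    integrable_of_bound ρ _ (hf.comp measurable_fst) C (fun p => hfb p.1)
  have hig : Integrable (fun p : X × Y => g p.2) ρ :=
    integrable_of_bound ρ _ (hg.comp measurable_snd) C (fun p => hgb p.2)
  rw [integral_add hif hig, ← h1, ← h2,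
    integral_map measurable_fst.aemeasurable (by rw [h1]; exact hf.aestronglyMeasurable), integral_map measurable_snd.aemeasurable (by rw [h2]; exact hg.aestronglyMeasurable)]

lemma ereal_sub_tendsto {A B : ℕ → ENNReal} {a b : ENNReal} (ha : a ≠ ⊤)
    (hA : Tendsto A atTop (𝓝 a)) (hB : Tendsto B atTop (𝓝 b)) :
    Tendsto (fun n => (A n : EReal) - (B n : EReal)) atTop (𝓝 ((a : EReal) - (b : EReal))) := by
  simp only [sub_eq_add_neg]
  have hpair : Tendsto (fun n => ((A n : EReal), -(B n : EReal))) atTop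
      (𝓝 ((a : EReal), -(b : EReal))) :=
    Tendsto.prodMk_nhds ((continuous_coe_ennreal_ereal.tendsto a).comp hA)
      ((continuous_neg.tendsto ((b : EReal))).comp ((continuous_coe_ennreal_ereal.tendsto b).comp hB))
  have hcont := EReal.continuousAt_add (p := ((a : EReal), -(b : EReal)))
    (Or.inl (by simp [EReal.coe_ennreal_eq_top_iff, ha])) (Or.inl (EReal.coe_ennreal_ne_bot a))
  exact Filter.Tendsto.comp hcont hpair

lemma ereal_sub_le_self {a b : EReal} (hb : 0 ≤ b) : a - b ≤ a := by
  rw [sub_eq_add_neg]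
  calc a + -b ≤ a + 0 := add_le_add le_rfl (by rwa [← neg_zero, EReal.neg_le_neg_iff])
  _ = a := add_zero a


end AuxiliaryLemmas

/-- for a strongly c-monotone plan π with potentials φ, ψ and any
competitor π₀ with finite cost, setting ξ(x,y) = φ(x) + ψ(y), the integrals
E_π(ξ) and E_{π₀}(ξ) exist, are equal, and I(π) = E_π(ξ) = E_{π₀}(ξ) ≤ I(π₀). -/
theorem potential_integrals_equal
    {X Y : Type*} [TopologicalSpace X] [PolishSpace X] [MeasurableSpace X] [BorelSpace X]
    [TopologicalSpace Y] [PolishSpace Y] [MeasurableSpace Y] [BorelSpace Y]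
    (c : X × Y → ENNReal) (hc : LowerSemicontinuous c)
    (μ : Measure X) (ν : Measure Y) [IsProbabilityMeasure μ] [IsProbabilityMeasure ν]
    (π : Measure (X × Y)) [IsProbabilityMeasure π]
    (hπ1 : π.map Prod.fst = μ) (hπ2 : π.map Prod.snd = ν)
    (φ : X → EReal) (ψ : Y → EReal) (hφm : Measurable φ) (hψm : Measurable ψ)
    (hφtop : ∀ x, φ x ≠ ⊤) (hψtop : ∀ y, ψ y ≠ ⊤)
    (hineq : ∀ x y, φ x + ψ y ≤ (c (x, y) : EReal))
    (heq : ∀ᵐ p ∂π, φ p.1 + ψ p.2 = (c p : EReal))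
    (π₀ : Measure (X × Y)) [IsProbabilityMeasure π₀]
    (hπ₀1 : π₀.map Prod.fst = μ) (hπ₀2 : π₀.map Prod.snd = ν)
    (hI₀ : ∫⁻ p, c p ∂π₀ ≠ ⊤) :
    EIntegralExists π (fun p => φ p.1 + ψ p.2) ∧
    EIntegralExists π₀ (fun p => φ p.1 + ψ p.2) ∧
    eIntegral π (fun p => φ p.1 + ψ p.2) = eIntegral π₀ (fun p => φ p.1 + ψ p.2) ∧
    ((∫⁻ p, c p ∂π : ENNReal) : EReal) = eIntegral π (fun p => φ p.1 + ψ p.2) ∧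
    eIntegral π₀ (fun p => φ p.1 + ψ p.2) ≤ ((∫⁻ p, c p ∂π₀ : ENNReal) : EReal) := by
  set h : ℕ → X × Y → ℝ := fun n p => Ftr n (φ p.1) + Ftr n (ψ p.2) with hh
  have hhm : ∀ n, Measurable (h n) := fun n =>
    ((Ftr_measurable n).comp (hφm.comp measurable_fst)).add
      ((Ftr_measurable n).comp (hψm.comp measurable_snd))
  have hhb : ∀ n p, |h n p| ≤ 2 * n := fun n p => by
    calc |h n p| ≤ |Ftr n (φ p.1)| + |Ftr n (ψ p.2)| := abs_add_le _ _
    _ ≤ (n : ℝ) + n := add_le_add (Ftr_abs_le n _) (Ftr_abs_le n _)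
    _ = 2 * n := by ring
  -- the four lintegral sequences
  set Ppi := ∫⁻ p, eposPart (φ p.1 + ψ p.2) ∂π with hPpi
  set Npi := ∫⁻ p, eposPart (-(φ p.1 + ψ p.2)) ∂π with hNpi
  set Ppi0 := ∫⁻ p, eposPart (φ p.1 + ψ p.2) ∂π₀ with hPpi0
  set Npi0 := ∫⁻ p, eposPart (-(φ p.1 + ψ p.2)) ∂π₀ with hNpi0
  have hposm : ∀ n, Measurable fun p : X × Y => ENNReal.ofReal (h n p) := fun n =>
    (hhm n).ennreal_ofReal
  have hnegm : ∀ n, Measurable fun p : X × Y => ENNReal.ofReal (-h n p) := fun n =>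
    (hhm n).neg.ennreal_ofReal
  have hPle : ∀ n (p : X × Y), ENNReal.ofReal (h n p) ≤ eposPart (φ p.1 + ψ p.2) :=
    fun n p => PB1 (hφtop p.1) (hψtop p.2) n
  have hNle : ∀ n (p : X × Y), ENNReal.ofReal (-h n p) ≤ eposPart (-(φ p.1 + ψ p.2)) :=
    fun n p => by simp only [hh]; exact PB2 (hφtop p.1) (hψtop p.2) n
  have hPlim : ∀ p : X × Y, Tendsto (fun n => ENNReal.ofReal (h n p)) atTop
      (𝓝 (eposPart (φ p.1 + ψ p.2))) := fun p => PB3 (hφtop p.1) (hψtop p.2)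
  have hNlim : ∀ p : X × Y, Tendsto (fun n => ENNReal.ofReal (-h n p)) atTop
      (𝓝 (eposPart (-(φ p.1 + ψ p.2)))) := fun p => by
    simp only [hh]; exact PB4 (hφtop p.1) (hψtop p.2)
  have tP : Tendsto (fun n => ∫⁻ p, ENNReal.ofReal (h n p) ∂π) atTop (𝓝 Ppi) :=
    lintegral_tendsto_squeeze π _ _ hposm hPle hPlim
  have tN : Tendsto (fun n => ∫⁻ p, ENNReal.ofReal (-h n p) ∂π) atTop (𝓝 Npi) :=
    lintegral_tendsto_squeeze π _ _ hnegm hNle hNlim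
  have tP0 : Tendsto (fun n => ∫⁻ p, ENNReal.ofReal (h n p) ∂π₀) atTop (𝓝 Ppi0) :=
    lintegral_tendsto_squeeze π₀ _ _ hposm hPle hPlim
  have tN0 : Tendsto (fun n => ∫⁻ p, ENNReal.ofReal (-h n p) ∂π₀) atTop (𝓝 Npi0) :=
    lintegral_tendsto_squeeze π₀ _ _ hnegm hNle hNlim
  -- finiteness of truncated integrals
  have hfin : ∀ (ρ : Measure (X × Y)) [IsProbabilityMeasure ρ], ∀ n,
      (∫⁻ p, ENNReal.ofReal (h n p) ∂ρ) ≠ ⊤ ∧ (∫⁻ p, ENNReal.ofReal (-h n p) ∂ρ) ≠ ⊤ := by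
    intro ρ _ n
    constructor
    · refine ne_top_of_le_ne_top ?_ (lintegral_mono fun p =>
        ENNReal.ofReal_le_ofReal (le_trans (le_abs_self _) (hhb n p)))
      simp [lintegral_const]; exact ENNReal.mul_ne_top (by simp) (by simp)
    · refine ne_top_of_le_ne_top ?_ (lintegral_mono fun p =>
        ENNReal.ofReal_le_ofReal (le_trans (neg_le_abs _) (hhb n p)))
      simp [lintegral_const]; exact ENNReal.mul_ne_top (by simp) (by simp)
  -- a.e. nonnegativity under π
  have hae : ∀ᵐ p ∂π, 0 ≤ φ p.1 + ψ p.2 := by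
    filter_upwards [heq] with p hp
    rw [hp]; exact EReal.coe_ennreal_nonneg _
  have hNpi_zero : Npi = 0 := by
    rw [hNpi, ← lintegral_zero (μ := π)]
    apply lintegral_congr_ae
    filter_upwards [hae] with p hp
    exact eposPart_nonpos (by rwa [← neg_zero, EReal.neg_le_neg_iff])
  have hNn_zero : ∀ n, (∫⁻ p, ENNReal.ofReal (-h n p) ∂π) = 0 := by
    intro n
    rw [← lintegral_zero (μ := π)]
    apply lintegral_congr_ae
    filter_upwards [hae] with p hp
    have := (EL1 (hφtop p.1) (hψtop p.2) n hp).1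
    simp only [hh, ENNReal.ofReal_eq_zero]
    linarith
  -- the marginal identity
  have key : ∀ n, ∫ p, h n p ∂π = ∫ p, h n p ∂π₀ := by
    intro n
    simp only [hh]
    rw [integral_sum_marginals μ ν π hπ1 hπ2 (fun x => Ftr n (φ x)) (fun y => Ftr n (ψ y))
        ((Ftr_measurable n).comp hφm) ((Ftr_measurable n).comp hψm) n
        (fun x => Ftr_abs_le n _) (fun y => Ftr_abs_le n _),
      integral_sum_marginals μ ν π₀ hπ₀1 hπ₀2 (fun x => Ftr n (φ x)) (fun y => Ftr n (ψ y))
        ((Ftr_measurable n).comp hφm) ((Ftr_measurable n).comp hψm) n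
        (fun x => Ftr_abs_le n _) (fun y => Ftr_abs_le n _)]
  -- Bochner integral vs pos/neg lintegrals
  have repr : ∀ (ρ : Measure (X × Y)) [IsProbabilityMeasure ρ], ∀ n,
      ((∫ p, h n p ∂ρ : ℝ) : EReal) =
        ((∫⁻ p, ENNReal.ofReal (h n p) ∂ρ : ENNReal) : EReal) -
          ((∫⁻ p, ENNReal.ofReal (-h n p) ∂ρ : ENNReal) : EReal) := by
    intro ρ _ n
    rw [integral_eq_lintegral_pos_part_sub_lintegral_neg_part
      (integrable_of_bound ρ (h n) (hhm n) (2 * n) (hhb n))]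
    rw [EReal.coe_sub, coe_ennreal_toReal' (hfin ρ n).1, coe_ennreal_toReal' (hfin ρ n).2]
  -- limits of the common sequence
  have limπ : Tendsto (fun n => ((∫ p, h n p ∂π : ℝ) : EReal)) atTop (𝓝 ((Ppi : EReal))) := by
    have : ∀ n, ((∫ p, h n p ∂π : ℝ) : EReal) =
        ((∫⁻ p, ENNReal.ofReal (h n p) ∂π : ENNReal) : EReal) := by
      intro n
      rw [repr π n, hNn_zero n, EReal.coe_ennreal_zero, sub_zero]
    simp only [this]
    exact (continuous_coe_ennreal_ereal.tendsto Ppi).comp tP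
  have hPpi0_le : Ppi0 ≤ ∫⁻ p, c p ∂π₀ := by
    rw [hPpi0]
    apply lintegral_mono fun p => ?_
    calc eposPart (φ p.1 + ψ p.2) ≤ eposPart ((c p : EReal)) :=
      eposPart_mono (hineq p.1 p.2)
    _ = c p := eposPart_coe_ennreal _
  have hPpi0_fin : Ppi0 ≠ ⊤ := ne_top_of_le_ne_top hI₀ hPpi0_le
  have limπ0 : Tendsto (fun n => ((∫ p, h n p ∂π₀ : ℝ) : EReal)) atTop
      (𝓝 ((Ppi0 : EReal) - (Npi0 : EReal))) := by
    have : ∀ n, ((∫ p, h n p ∂π₀ : ℝ) : EReal) =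
        ((∫⁻ p, ENNReal.ofReal (h n p) ∂π₀ : ENNReal) : EReal) -
          ((∫⁻ p, ENNReal.ofReal (-h n p) ∂π₀ : ENNReal) : EReal) := fun n => repr π₀ n
    simp only [this]
    exact ereal_sub_tendsto hPpi0_fin tP0 tN0
  have main : (Ppi : EReal) = (Ppi0 : EReal) - (Npi0 : EReal) := by
    apply tendsto_nhds_unique (limπ.congr fun n => by rw [key n]) limπ0
  -- identify Ppi with the cost integral
  have hPpi_cost : Ppi = ∫⁻ p, c p ∂π := by
    rw [hPpi]
    apply lintegral_congr_ae
    filter_upwards [heq] with p hp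
    rw [hp, eposPart_coe_ennreal]
  -- final assembly
  have hEπ : eIntegral π (fun p => φ p.1 + ψ p.2) = (Ppi : EReal) := by
    simp only [eIntegral]
    rw [← hPpi, ← hNpi, hNpi_zero, EReal.coe_ennreal_zero, sub_zero]
  have hEπ0 : eIntegral π₀ (fun p => φ p.1 + ψ p.2) = (Ppi0 : EReal) - (Npi0 : EReal) := rfl
  refine ⟨Or.inr (by rw [← hNpi, hNpi_zero]; exact ENNReal.zero_ne_top),
    Or.inl (by rw [← hPpi0]; exact hPpi0_fin), ?_, ?_, ?_⟩
  · rw [hEπ, hEπ0, main]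
  · rw [hEπ, hPpi_cost]
  · rw [hEπ0]
    calc (Ppi0 : EReal) - (Npi0 : EReal) ≤ (Ppi0 : EReal) :=
      ereal_sub_le_self (EReal.coe_ennreal_nonneg _)
    _ ≤ ((∫⁻ p, c p ∂π₀ : ENNReal) : EReal) :=
      EReal.coe_ennreal_le_coe_ennreal_iff.2 hPpi0_le
end

section
/- Let X, Y be Polish spaces, c : X × Y → [0,∞) finitely valued and lower semi-continuous, and π a c-monotone transport plan in Π(μ,ν). Then there exists a c-monotone Borel set Γ = ⋃_{k≥1} Γ_k with each Γ_k compact, c restricted to each Γ_k continuous, and π(Γ) = 1. -/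
open MeasureTheory Filter Topology

lemma geom_half_sum : ∑' n : ℕ, ((2:ENNReal)⁻¹) ^ (n + 1) = 1 := by
  have h : ∑' n : ℕ, ((2:ENNReal)⁻¹) ^ n = 2 := by
    rw [ENNReal.tsum_geometric]
    norm_num
  calc ∑' n : ℕ, ((2:ENNReal)⁻¹) ^ (n + 1)
      = ∑' n : ℕ, ((2:ENNReal)⁻¹) ^ n * 2⁻¹ := by
        congr 1; ext n; rw [pow_succ]
    _ = 2 * 2⁻¹ := by rw [ENNReal.tsum_mul_right, h]
    _ = 1 := by rw [ENNReal.mul_inv_cancel] <;> norm_num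

lemma half_pow_ne_zero (n : ℕ) : ((2:ENNReal)⁻¹) ^ n ≠ 0 :=
  pow_ne_zero _ (ENNReal.inv_ne_zero.2 ENNReal.ofNat_ne_top)

/-- Tightness of finite Borel measures on complete second-countable metric spaces. -/
lemma tight_aux {Z : Type*} [MetricSpace Z] [CompleteSpace Z] [SecondCountableTopology Z]
    [MeasurableSpace Z] [BorelSpace Z] (μ : Measure Z) [IsFiniteMeasure μ]
    {ε : ENNReal} (hε : ε ≠ 0) : ∃ K : Set Z, IsCompact K ∧ μ Kᶜ ≤ ε := by
  rcases isEmpty_or_nonempty Z with hZ | hZ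
  · refine ⟨∅, isCompact_empty, ?_⟩
    have : (∅ : Set Z)ᶜ = (∅ : Set Z) := by
      rw [Set.compl_empty, Set.univ_eq_empty_iff.2 hZ]
    rw [this, measure_empty]; exact zero_le
  · set u := TopologicalSpace.denseSeq Z with hu_def
    have hu : DenseRange u := TopologicalSpace.denseRange_denseSeq Z
    set S : ℕ → ℕ → Set Z :=
      fun n M => ⋃ m ∈ Finset.range M, Metric.closedBall (u m) (1/(n+1)) with hS_def
    have hSclosed : ∀ n M, IsClosed (S n M) := fun n M =>
      Set.Finite.isClosed_biUnion (Finset.range M).finite_toSet (fun m _ => Metric.isClosed_closedBall)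
    have hSmono : ∀ n, Monotone (S n) := by
      intro n M M' hMM'
      exact Set.biUnion_subset_biUnion_left (Finset.range_subset_range.2 hMM')
    have hScover : ∀ n, (⋃ M, S n M) = Set.univ := by
      intro n
      ext z; simp only [Set.mem_iUnion, Set.mem_univ, iff_true]
      obtain ⟨m, hm⟩ := Metric.denseRange_iff.1 hu z (1/(n+1)) (by positivity)
      exact ⟨m + 1, Set.mem_biUnion (Finset.self_mem_range_succ m)
        (Metric.mem_closedBall.2 hm.le)⟩
    have hchoice : ∀ n : ℕ, ∃ M, μ (S n M)ᶜ ≤ ε * 2⁻¹ ^ (n + 1) := by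
      intro n
      have hanti : Antitone (fun M => (S n M)ᶜ) :=
        fun M M' h => Set.compl_subset_compl.2 (hSmono n h)
      have hiInter : (⋂ M, (S n M)ᶜ) = ∅ := by
        rw [← Set.compl_iUnion, hScover n, Set.compl_univ]
      have htend : Tendsto (fun M => μ (S n M)ᶜ) atTop (𝓝 0) := by
        have := tendsto_measure_iInter_atTop (μ := μ)
          (fun M => ((hSclosed n M).isOpen_compl.measurableSet).nullMeasurableSet)
          hanti ⟨0, measure_ne_top _ _⟩
        rwa [hiInter, measure_empty] at this
      have hpos : (0:ENNReal) < ε * 2⁻¹ ^ (n + 1) :=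
        ENNReal.mul_pos hε (half_pow_ne_zero _)
      exact ((htend.eventually (ge_mem_nhds hpos)).exists).imp (fun M hM => hM)
    choose M hM using hchoice
    refine ⟨⋂ n, S n (M n), ?_, ?_⟩
    · apply TotallyBounded.isCompact_of_isClosed
      · rw [Metric.totallyBounded_iff]
        intro δ hδ
        obtain ⟨n, hn⟩ := exists_nat_one_div_lt hδ
        refine ⟨u '' ↑(Finset.range (M n)), (Finset.range (M n)).finite_toSet.image u, ?_⟩
        intro z hz
        have hz' : z ∈ S n (M n) := Set.mem_iInter.1 hz n
        obtain ⟨m, hm, hzm⟩ := Set.mem_iUnion₂.1 hz'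
        refine Set.mem_biUnion (Set.mem_image_of_mem u hm) ?_
        exact Metric.mem_ball.2 (lt_of_le_of_lt (Metric.mem_closedBall.1 hzm) (by exact_mod_cast hn))
      · exact isClosed_iInter fun n => hSclosed n (M n)
    · rw [Set.compl_iInter]
      calc μ (⋃ n, (S n (M n))ᶜ) ≤ ∑' n, μ (S n (M n))ᶜ := measure_iUnion_le _
        _ ≤ ∑' n, ε * 2⁻¹ ^ (n + 1) := ENNReal.tsum_le_tsum hM
        _ = ε * ∑' n, (2:ENNReal)⁻¹ ^ (n + 1) := ENNReal.tsum_mul_left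
        _ = ε := by rw [geom_half_sum, mul_one]

/-- Inner regularity by compact sets for finite Borel measures on
complete second-countable metric spaces. -/
lemma compact_approx {Z : Type*} [MetricSpace Z] [CompleteSpace Z] [SecondCountableTopology Z]
    [MeasurableSpace Z] [BorelSpace Z] (μ : Measure Z) [IsFiniteMeasure μ]
    {A : Set Z} (hA : MeasurableSet A) {ε : ENNReal} (hε : ε ≠ 0) :
    ∃ K, K ⊆ A ∧ IsCompact K ∧ μ (A \ K) ≤ ε := by
  have hε2 : ε / 2 ≠ 0 := by
    simp [ENNReal.div_eq_top, hε, ENNReal.div_eq_zero_iff]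
  obtain ⟨F, hFA, hFclosed, hF⟩ := hA.exists_isClosed_diff_lt (measure_ne_top μ A) hε2
  obtain ⟨K', hK'c, hK'⟩ := tight_aux μ hε2
  refine ⟨F ∩ K', Set.inter_subset_left.trans hFA, hK'c.inter_left hFclosed, ?_⟩
  calc μ (A \ (F ∩ K')) ≤ μ ((A \ F) ∪ K'ᶜ) := by
        apply measure_mono
        rintro p ⟨hpA, hp⟩
        by_cases h : p ∈ F
        · right; exact fun h' => hp ⟨h, h'⟩
        · left; exact ⟨hpA, h⟩
    _ ≤ μ (A \ F) + μ K'ᶜ := measure_union_le _ _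
    _ ≤ ε / 2 + ε / 2 := add_le_add hF.le hK'
    _ = ε := ENNReal.add_halves ε

/-- Lusin's theorem (for `ENNReal`-valued measurable functions). -/
lemma lusin_aux {Z : Type*} [MetricSpace Z] [CompleteSpace Z] [SecondCountableTopology Z]
    [MeasurableSpace Z] [BorelSpace Z] (μ : Measure Z) [IsFiniteMeasure μ]
    {c : Z → ENNReal} (hc : Measurable c) {A : Set Z} (hA : MeasurableSet A)
    {ε : ENNReal} (hε : ε ≠ 0) :
    ∃ K, K ⊆ A ∧ IsCompact K ∧ Continuous (fun p : K => c p) ∧ μ (A \ K) ≤ ε := by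
  have h2 : ((2:ENNReal)⁻¹) ≠ 0 := ENNReal.inv_ne_zero.2 ENNReal.ofNat_ne_top
  have h2c : (2:ENNReal)⁻¹ * 2 = 1 := ENNReal.inv_mul_cancel two_ne_zero ENNReal.ofNat_ne_top
  obtain ⟨b, hbc, -, hb⟩ := TopologicalSpace.exists_countable_basis ENNReal
  have hbne : b.Nonempty := by
    by_contra h
    have h0 := hb.sUnion_eq
    rw [Set.not_nonempty_iff_eq_empty.1 h, Set.sUnion_empty] at h0
    have : (0:ENNReal) ∈ (∅ : Set ENNReal) := h0 ▸ Set.mem_univ 0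
    exact this
  obtain ⟨e, he⟩ := hbc.exists_eq_range hbne
  have heopen : ∀ n, IsOpen (e n) := fun n => hb.isOpen (by rw [he]; exact Set.mem_range_self n)
  have h1m : ∀ n, MeasurableSet (A ∩ c ⁻¹' (e n)) := fun n =>
    hA.inter (hc (heopen n).measurableSet)
  have h2m : ∀ n, MeasurableSet (A \ c ⁻¹' (e n)) := fun n =>
    hA.diff (hc (heopen n).measurableSet)
  have hεn : ∀ n : ℕ, ε * 2⁻¹ ^ (n + 3) ≠ 0 := fun n =>
    (ENNReal.mul_pos hε (half_pow_ne_zero _)).ne'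
  choose K₁ hK₁sub hK₁c hK₁ using fun n => compact_approx μ (h1m n) (hεn n)
  choose K₂ hK₂sub hK₂c hK₂ using fun n => compact_approx μ (h2m n) (hεn n)
  have hεhalf : ε * 2⁻¹ ≠ 0 := (ENNReal.mul_pos hε h2).ne'
  obtain ⟨K₀, hK₀sub, hK₀c, hK₀⟩ := compact_approx μ hA hεhalf
  refine ⟨K₀ ∩ ⋂ n, (K₁ n ∪ K₂ n), Set.inter_subset_left.trans hK₀sub,
    hK₀c.inter_right (isClosed_iInter fun n => ((hK₁c n).union (hK₂c n)).isClosed), ?_, ?_⟩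
  · -- continuity
    set K := K₀ ∩ ⋂ n, (K₁ n ∪ K₂ n) with hK_def
    have hbasis : TopologicalSpace.IsTopologicalBasis (Set.range e) := he ▸ hb
    rw [hbasis.continuous_iff]
    rintro s ⟨n, rfl⟩
    have hset : (fun p : K => c ↑p) ⁻¹' (e n) = Subtype.val ⁻¹' (K₂ n)ᶜ := by
      ext ⟨p, hp⟩
      simp only [Set.mem_preimage, Set.mem_compl_iff]
      constructor
      · intro hcp hpK₂
        exact ((hK₂sub n) hpK₂).2 hcp
      · intro hpn
        rcases Set.mem_iInter.1 hp.2 n with h | h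
        · exact ((hK₁sub n) h).2
        · exact absurd h hpn
    rw [hset]
    exact ((hK₂c n).isClosed.isOpen_compl).preimage continuous_subtype_val
  · -- measure estimate
    have hpair : ∀ n : ℕ, ε * 2⁻¹ ^ (n + 3) + ε * 2⁻¹ ^ (n + 3) = ε * 2⁻¹ ^ (n + 2) := by
      intro n
      calc ε * 2⁻¹ ^ (n + 3) + ε * 2⁻¹ ^ (n + 3) = ε * 2⁻¹ ^ (n + 2) * (2⁻¹ * 2) := by ring
        _ = ε * 2⁻¹ ^ (n + 2) := by rw [h2c, mul_one]
    have hsum : ∑' n : ℕ, ε * 2⁻¹ ^ (n + 2) = ε * 2⁻¹ := by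
      have hp : ∀ n : ℕ, ε * 2⁻¹ ^ (n + 2) = ε * 2⁻¹ ^ (n + 1) * 2⁻¹ := by
        intro n; rw [pow_succ, mul_assoc]
      rw [tsum_congr hp, ENNReal.tsum_mul_right, ENNReal.tsum_mul_left, geom_half_sum, mul_one]
    have hsub : A \ (K₀ ∩ ⋂ n, (K₁ n ∪ K₂ n)) ⊆
        (A \ K₀) ∪ ⋃ n, ((A ∩ c ⁻¹' (e n)) \ K₁ n ∪ (A \ c ⁻¹' (e n)) \ K₂ n) := by
      rintro p ⟨hpA, hpK⟩
      by_cases h0 : p ∈ K₀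
      · have h1 : p ∉ ⋂ n, (K₁ n ∪ K₂ n) := fun h => hpK ⟨h0, h⟩
        obtain ⟨n, hn⟩ : ∃ n, p ∉ K₁ n ∪ K₂ n := by
          simpa [Set.mem_iInter] using h1
        right
        refine Set.mem_iUnion.2 ⟨n, ?_⟩
        by_cases hc' : c p ∈ e n
        · exact Or.inl ⟨⟨hpA, hc'⟩, fun h => hn (Or.inl h)⟩
        · exact Or.inr ⟨⟨hpA, hc'⟩, fun h => hn (Or.inr h)⟩
      · exact Or.inl ⟨hpA, h0⟩
    calc μ (A \ (K₀ ∩ ⋂ n, (K₁ n ∪ K₂ n)))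
        ≤ μ ((A \ K₀) ∪ ⋃ n, ((A ∩ c ⁻¹' (e n)) \ K₁ n ∪ (A \ c ⁻¹' (e n)) \ K₂ n)) :=
          measure_mono hsub
      _ ≤ μ (A \ K₀) + μ (⋃ n, ((A ∩ c ⁻¹' (e n)) \ K₁ n ∪ (A \ c ⁻¹' (e n)) \ K₂ n)) :=
          measure_union_le _ _
      _ ≤ μ (A \ K₀) + ∑' n, μ ((A ∩ c ⁻¹' (e n)) \ K₁ n ∪ (A \ c ⁻¹' (e n)) \ K₂ n) :=
          add_le_add le_rfl (measure_iUnion_le _)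
      _ ≤ ε * 2⁻¹ + ∑' n : ℕ, (ε * 2⁻¹ ^ (n + 3) + ε * 2⁻¹ ^ (n + 3)) :=
          add_le_add hK₀ (ENNReal.tsum_le_tsum fun n =>
            (measure_union_le _ _).trans (add_le_add (hK₁ n) (hK₂ n)))
      _ = ε * 2⁻¹ + ε * 2⁻¹ := by rw [tsum_congr hpair, hsum]
      _ = ε := by
          rw [← mul_add]
          have : (2:ENNReal)⁻¹ + 2⁻¹ = 1 := by rw [← two_mul, mul_comm, h2c]
          rw [this, mul_one]

/-- A set Γ ⊆ X × Y is c-monotone (c-cyclically monotone). -/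
def CMonotone {X Y : Type*} (c : X × Y → ENNReal) (Γ : Set (X × Y)) : Prop :=
  ∀ (n : ℕ), 1 ≤ n → ∀ (x : Fin n → X) (y : Fin n → Y), (∀ i, (x i, y i) ∈ Γ) →
    ∀ σ : Equiv.Perm (Fin n), ∑ i, c (x i, y i) ≤ ∑ i, c (x i, y (σ i))

/-- a c-monotone transport plan (for finite lsc c) is concentrated
on a c-monotone set Γ = ⋃ₖ Γₖ with Γₖ compact and c|Γₖ continuous. -/
theorem cMonotone_concentrated_on_sigma_compact
    {X Y : Type*} [TopologicalSpace X] [PolishSpace X] [MeasurableSpace X] [BorelSpace X]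
    [TopologicalSpace Y] [PolishSpace Y] [MeasurableSpace Y] [BorelSpace Y]
    (c : X × Y → ENNReal) (hc : LowerSemicontinuous c) (hfin : ∀ p, c p ≠ ⊤)
    (μ : Measure X) (ν : Measure Y) [IsProbabilityMeasure μ] [IsProbabilityMeasure ν]
    (π : Measure (X × Y)) [IsProbabilityMeasure π]
    (hπ1 : π.map Prod.fst = μ) (hπ2 : π.map Prod.snd = ν)
    (Γ' : Set (X × Y)) (hΓ'm : MeasurableSet Γ') (hΓ' : CMonotone c Γ') (hπΓ' : π Γ' = 1) :
    ∃ Γk : ℕ → Set (X × Y),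
      (∀ k, IsCompact (Γk k)) ∧
      (∀ k, Continuous fun p : Γk k => c p) ∧
      CMonotone c (⋃ k, Γk k) ∧
      π (⋃ k, Γk k) = 1 := by
  letI := TopologicalSpace.upgradeIsCompletelyMetrizable (X × Y)
  have hcm : Measurable c := hc.measurable
  have hkey : ∀ k : ℕ, ∃ K, K ⊆ Γ' ∧ IsCompact K ∧ Continuous (fun p : K => c p) ∧
      π (Γ' \ K) ≤ 2⁻¹ ^ (k + 1) :=
    fun k => lusin_aux π hcm hΓ'm (half_pow_ne_zero (k + 1))
  choose Γk hsub hcomp hcont hmeas using hkey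
  have hU : (⋃ k, Γk k) ⊆ Γ' := Set.iUnion_subset hsub
  refine ⟨Γk, hcomp, hcont, ?_, ?_⟩
  · intro n hn x y hxy σ
    exact hΓ' n hn x y (fun i => hU (hxy i)) σ
  · have hdiff : π (Γ' \ ⋃ k, Γk k) = 0 := by
      have hle : ∀ k, π (Γ' \ ⋃ j, Γk j) ≤ 2⁻¹ ^ (k + 1) := fun k =>
        le_trans (measure_mono (Set.diff_subset_diff_right (Set.subset_iUnion _ k))) (hmeas k)
      have htend : Filter.Tendsto (fun k : ℕ => ((2:ENNReal)⁻¹) ^ (k + 1))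
          Filter.atTop (𝓝 0) := by
        have h1 : (2:ENNReal)⁻¹ < 1 := by
          rw [ENNReal.inv_lt_one]; exact ENNReal.one_lt_two
        exact (ENNReal.tendsto_pow_atTop_nhds_zero_of_lt_one h1).comp
          (Filter.tendsto_add_atTop_nat 1)
      exact le_antisymm (ge_of_tendsto htend (Filter.Eventually.of_forall hle)) zero_le
    have hsplit : π Γ' ≤ π (⋃ k, Γk k) + π (Γ' \ ⋃ k, Γk k) := by
      refine le_trans (measure_mono ?_) (measure_union_le _ _)
      intro p hp
      by_cases h : p ∈ ⋃ k, Γk k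
      · exact Or.inl h
      · exact Or.inr ⟨hp, h⟩
    rw [hdiff, add_zero, hπΓ'] at hsplit
    exact le_antisymm prob_le_one hsplit
end

section
/- Let X, Y be Polish spaces and c : X × Y → [0,∞) continuous. If πₙ → π weakly and each πₙ is concentrated on a c-monotone set (e.g., supp πₙ is c-monotone), then supp π is c-monotone, i.e., for all m, all (x₁,y₁),…,(xₘ,yₘ) ∈ supp π, and all permutations σ: ∑ c(xᵢ,yᵢ) ≤ ∑ c(xᵢ,y_{σ(i)}). -/
open MeasureTheory Filter Topology

/-- The (topological) support of a measure: points all of whose open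
neighbourhoods have positive measure. -/
def msupport {Z : Type*} [TopologicalSpace Z] [MeasurableSpace Z] (μ : Measure Z) :
    Set Z := {z | ∀ U : Set Z, IsOpen U → z ∈ U → 0 < μ U}

/-- In a second-countable space, an open set of positive measure meets the support. -/
lemma exists_mem_msupport {Z : Type*} [TopologicalSpace Z]
    [SecondCountableTopology Z] [MeasurableSpace Z] (μ : Measure Z)
    {U : Set Z} (hU : IsOpen U) (hpos : 0 < μ U) : ∃ z ∈ U, z ∈ msupport μ := by
  by_contra h
  push_neg at h
  -- every point of U has an open null neighbourhood
  have key : ∀ z : U, ∃ V : Set Z, IsOpen V ∧ (z : Z) ∈ V ∧ μ V = 0 := by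
    rintro ⟨z, hz⟩
    have := h z hz
    simp only [msupport, Set.mem_setOf_eq, not_forall] at this
    obtain ⟨V, hVo, hzV, hV⟩ := this
    exact ⟨V, hVo, hzV, le_antisymm (not_lt.mp hV) bot_le⟩
  choose V hVo hzV hVnull using key
  obtain ⟨T, hTc, hTU⟩ := TopologicalSpace.isOpen_iUnion_countable V hVo
  have hUsub : U ⊆ ⋃ i ∈ T, V i := by
    intro z hz
    rw [hTU]
    exact Set.mem_iUnion.mpr ⟨⟨z, hz⟩, hzV ⟨z, hz⟩⟩
  have : μ U = 0 := measure_mono_null hUsub (by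
    exact (measure_biUnion_null_iff hTc).mpr fun i _ => hVnull i)
  exact absurd this hpos.ne'

/-- if πₙ → π weakly and each supp πₙ is c-monotone (c continuous,
finitely valued), then supp π is c-monotone. -/
theorem support_limit_cMonotone
    {X Y : Type*} [TopologicalSpace X] [PolishSpace X] [MeasurableSpace X] [BorelSpace X]
    [TopologicalSpace Y] [PolishSpace Y] [MeasurableSpace Y] [BorelSpace Y]
    (c : X × Y → ENNReal) (hc : Continuous c) (hfin : ∀ p, c p ≠ ⊤)
    (πn : ℕ → ProbabilityMeasure (X × Y)) (π : ProbabilityMeasure (X × Y))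
    (hconv : Tendsto πn atTop (𝓝 π))
    (hmono : ∀ n, CMonotone c (msupport (πn n : Measure (X × Y)))) :
    CMonotone c (msupport (π : Measure (X × Y))) := by
  intro m hm x y hxy σ
  by_contra hlt
  push_neg at hlt
  letI := TopologicalSpace.upgradeIsCompletelyMetrizable (X × Y)
  -- the functions on m-tuples of points
  set f : (Fin m → X × Y) → ENNReal := fun q => ∑ i, c (q i) with hf
  set g : (Fin m → X × Y) → ENNReal := fun q => ∑ i, c ((q i).1, (q (σ i)).2) with hg
  have hfc : Continuous f := continuous_finset_sum _ fun i _ =>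
    hc.comp (continuous_apply i)
  have hgc : Continuous g := continuous_finset_sum _ fun i _ =>
    hc.comp ((continuous_fst.comp (continuous_apply i)).prodMk
      (continuous_snd.comp (continuous_apply (σ i))))
  have hW : IsOpen {q : Fin m → X × Y | g q < f q} := isOpen_lt hgc hfc
  set P : Fin m → X × Y := fun i => (x i, y i) with hP
  have hPW : P ∈ {q : Fin m → X × Y | g q < f q} := hlt
  obtain ⟨U, hU, hUW⟩ := (isOpen_pi_iff'.mp hW) P hPW
  -- each U i has positive π-measure
  have hpos : ∀ i, 0 < (π : Measure (X × Y)) (U i) := fun i =>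
    hxy i (U i) (hU i).1 (hU i).2
  -- portmanteau: eventually πₙ (U i) > 0 for all i
  have hev : ∀ᶠ n in atTop, ∀ i, 0 < (πn n : Measure (X × Y)) (U i) := by
    rw [eventually_all]
    intro i
    have hle : (π : Measure (X × Y)) (U i)
        ≤ atTop.liminf fun n => (πn n : Measure (X × Y)) (U i) :=
      ProbabilityMeasure.le_liminf_measure_open_of_tendsto hconv (hU i).1
    have := hpos i
    have hlt' : (0 : ENNReal) < atTop.liminf fun n => (πn n : Measure (X × Y)) (U i) :=
      lt_of_lt_of_le this hle
    exact (eventually_lt_of_lt_liminf hlt').mono fun n hn => hn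
  obtain ⟨n, hn⟩ := hev.exists
  -- pick points of supp πₙ in each U i
  have hpick : ∀ i, ∃ z ∈ U i, z ∈ msupport (πn n : Measure (X × Y)) := fun i =>
    exists_mem_msupport _ (hU i).1 (hn i)
  choose q hqU hqS using hpick
  have hq : q ∈ Set.univ.pi U := fun i _ => hqU i
  have hqW := hUW hq
  have hmonon := hmono n m hm (fun i => (q i).1) (fun i => (q i).2)
    (fun i => by simpa using hqS i) σ
  exact absurd hmonon (not_le.mpr hqW)
end
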